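/- arXiv:2306.10991 — 7 statements merged into one kernel-verified Lean document; each statement's English description precedes it below -/
import Mathlib

section
/- Let $s$ be an arithmetic function (indexed from 1) with $s(1) \neq 0$, and let $f, g$ be sequences such that $g(k) = \sum_{r=0}^{k} s(k-r+1) f(r)$ for all $k \geq 0$. Then $f(k) = \sum_{r=0}^{k} \frac{(-1)^r}{s(1)^{r+1}} h(r)\, g(k-r)$, where $h(r) = \sum (-1)^{b_1} \prod_{i=1}^{r+1} s(i)^{b_i} \frac{(r-b_1)!}{b_2! \cdots b_{r+1}!}$, the sum running over all tuples of non-negative integers $(b_1,\dots,b_{r+1})$ with $\sum_{i=1}^{r+1} i\, b_i = 2r$ and $\sum_{i=1}^{r+1} b_i = r$. -/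
open Finset


/-- The combinatorial sum `h(r)` over integer partitions of `2r` into exactly `r` parts,
with `b i` the number of parts equal to `i`. -/
noncomputable def hFun (s : ℕ → ℂ) (r : ℕ) : ℂ :=
  ∑ b ∈ (Finset.Nat.antidiagonalTuple (r + 1) r).filter
      (fun b => ∑ i : Fin (r + 1), (i.1 + 1) * b i = 2 * r),
    (-1 : ℂ) ^ (b 0) * (∏ i : Fin (r + 1), (s (i.1 + 1)) ^ (b i)) *
      (Nat.factorial (r - b 0) : ℂ) /
      ∏ i ∈ Finset.univ.filter (fun i : Fin (r + 1) => 0 < i.1), (Nat.factorial (b i) : ℂ)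


open Polynomial


noncomputable def vA (s : ℕ → ℂ) (j : ℕ) : ℂ := if j = 0 then 0 else s (j + 1)

noncomputable def uA (s : ℕ → ℂ) (N : ℕ) : Polynomial ℂ :=
  ∑ j ∈ Finset.range (N + 1), Polynomial.C (vA s j) * Polynomial.X ^ j

noncomputable def QA (s : ℕ → ℂ) (m r : ℕ) : ℂ :=
  ∑ k ∈ (Finset.piAntidiag (Finset.range (r + 1)) m).filter
      (fun k => ∑ j ∈ Finset.range (r + 1), j * k j = r),
    (Nat.multinomial (Finset.range (r + 1)) k : ℂ) *
      ∏ j ∈ Finset.range (r + 1), (vA s j) ^ (k j)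

lemma X_dvd_uA (s : ℕ → ℂ) (N : ℕ) : (X : Polynomial ℂ) ∣ uA s N := by
  refine Finset.dvd_sum fun j hj => ?_
  rcases Nat.eq_zero_or_pos j with h | h
  · subst h; simp [vA]
  · exact Dvd.dvd.mul_left (dvd_pow_self X h.ne') _

lemma coeff_uA_pow_eq_QA (s : ℕ → ℂ) (m r : ℕ) :
    ((uA s r) ^ m).coeff r = QA s m r := by
  rw [uA, Finset.sum_pow_eq_sum_piAntidiag, Polynomial.finset_sum_coeff, QA,
    Finset.sum_filter]
  refine Finset.sum_congr rfl fun k hk => ?_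
  have hprod : ∏ j ∈ Finset.range (r + 1), (Polynomial.C (vA s j) * Polynomial.X ^ j) ^ k j
      = Polynomial.C (∏ j ∈ Finset.range (r + 1), vA s j ^ k j) *
        Polynomial.X ^ (∑ j ∈ Finset.range (r + 1), j * k j) := by
    rw [map_prod, ← Finset.prod_pow_eq_pow_sum, ← Finset.prod_mul_distrib]
    refine Finset.prod_congr rfl fun j _ => ?_
    rw [mul_pow, ← Polynomial.C_pow, ← pow_mul]
  rw [hprod, ← Polynomial.C_eq_natCast, ← mul_assoc, ← Polynomial.C_mul,
    Polynomial.coeff_C_mul, Polynomial.coeff_X_pow]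
  by_cases h : ∑ j ∈ Finset.range (r + 1), j * k j = r 
  · simp [h]
  · rw [if_neg (fun hh => h hh.symm), if_neg h, mul_zero]

lemma coeff_uA_pow_lt (s : ℕ → ℂ) (N m r : ℕ) (h : r < m) :
    ((uA s N) ^ m).coeff r = 0 := by
  obtain ⟨q, hq⟩ := pow_dvd_pow_of_dvd (X_dvd_uA s N) m
  rw [hq, mul_comm, Polynomial.coeff_mul_X_pow']
  rw [if_neg (by omega)]

lemma coeff_uA_pow_stable (s : ℕ → ℂ) (N m r : ℕ) (h : r ≤ N) :
    ((uA s N) ^ m).coeff r = ((uA s r) ^ m).coeff r := by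
  have hdvd : (X : Polynomial ℂ) ^ (r + 1) ∣ uA s N - uA s r := by
    rw [uA, uA, ← Finset.sum_Ico_eq_sub _ (by omega)]
    refine Finset.dvd_sum fun j hj => ?_
    rw [Finset.mem_Ico] at hj
    exact Dvd.dvd.mul_left (pow_dvd_pow X hj.1) _
  obtain ⟨q, hq⟩ := hdvd.trans (sub_dvd_pow_sub_pow (uA s N) (uA s r) m)
  have := congrArg (fun p => Polynomial.coeff p r) hq
  simp only [Polynomial.coeff_sub] at this
  rw [mul_comm, Polynomial.coeff_mul_X_pow'] at this
  rw [if_neg (by omega)] at this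
  exact sub_eq_zero.mp this

lemma QA_eq_filter0 (s : ℕ → ℂ) (m r : ℕ) :
    QA s m r = ∑ k ∈ (Finset.piAntidiag (Finset.range (r + 1)) m).filter
      (fun k => (∑ j ∈ Finset.range (r + 1), j * k j = r) ∧ k 0 = 0),
    (Nat.multinomial (Finset.range (r + 1)) k : ℂ) *
      ∏ j ∈ Finset.range (r + 1), (vA s j) ^ (k j) := by
  rw [QA, ← Finset.filter_filter]
  refine (Finset.sum_filter_of_ne fun k hk hne => ?_).symm
  by_contra h0
  apply hne
  have : ∏ j ∈ Finset.range (r + 1), (vA s j) ^ (k j) = 0 := by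
    refine Finset.prod_eq_zero (i := 0) (Finset.mem_range.mpr (by omega)) ?_
    rw [vA, if_pos rfl]
    exact zero_pow h0
  rw [this, mul_zero]

lemma hFun_eq_sum_QA (s : ℕ → ℂ) (r : ℕ) :
    hFun s r = ∑ m ∈ Finset.range (r + 1), (-1 : ℂ) ^ (r - m) * (s 1) ^ (r - m) * QA s m r := by
  simp_rw [QA_eq_filter0, Finset.mul_sum]
  rw [Finset.sum_sigma', hFun]
  refine Finset.sum_nbij'
    (i := fun b => ⟨r - b 0, fun j => if h : 0 < j ∧ j < r + 1 then b ⟨j, h.2⟩ else 0⟩)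
    (j := fun p => fun i : Fin (r + 1) => if i.1 = 0 then r - p.1 else p.2 i.1)
    ?_ ?_ ?_ ?_ ?_
  · -- hi : maps into sigma set
    intro b hb
    rw [Finset.mem_filter, Finset.Nat.mem_antidiagonalTuple] at hb
    obtain ⟨hb1, hb2⟩ := hb
    rw [Fin.sum_univ_succ] at hb1 hb2
    have h2' : ∑ i : Fin r, ((i.succ.1 + 1) * b i.succ)
        = ∑ i : Fin r, i.succ.1 * b i.succ + ∑ i : Fin r, b i.succ := by
      rw [← Finset.sum_add_distrib]
      exact Finset.sum_congr rfl fun i _ => by ring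
    rw [h2'] at hb2
    simp only [Fin.val_zero] at hb1 hb2
    have keval : ∀ i : Fin (r + 1),
        (if h : 0 < i.1 ∧ i.1 < r + 1 then b ⟨i.1, h.2⟩ else 0) = if i.1 = 0 then 0 else b i := by
      intro i
      by_cases h : i.1 = 0
      · simp [h]
      · rw [dif_pos ⟨Nat.pos_of_ne_zero h, i.isLt⟩, if_neg h, Fin.eta]
    have hsum : ∑ j ∈ Finset.range (r + 1), (if h : 0 < j ∧ j < r + 1 then b ⟨j, h.2⟩ else 0)
        = ∑ i : Fin r, b i.succ := by
      rw [← Fin.sum_univ_eq_sum_range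
        (fun j => if h : 0 < j ∧ j < r + 1 then b ⟨j, h.2⟩ else 0) (r + 1)]
      rw [Finset.sum_congr rfl fun i _ => keval i, Fin.sum_univ_succ]
      simp [Fin.val_succ]
    have hwsum : ∑ j ∈ Finset.range (r + 1),
          j * (if h : 0 < j ∧ j < r + 1 then b ⟨j, h.2⟩ else 0)
        = ∑ i : Fin r, i.succ.1 * b i.succ := by
      rw [← Fin.sum_univ_eq_sum_range
        (fun j => j * (if h : 0 < j ∧ j < r + 1 then b ⟨j, h.2⟩ else 0)) (r + 1)]
      rw [Finset.sum_congr rfl fun i _ => by rw [keval i], Fin.sum_univ_succ]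
      simp
    rw [Finset.mem_sigma, Finset.mem_filter, Finset.mem_piAntidiag]
    dsimp only
    refine ⟨Finset.mem_range.mpr (by omega), ⟨?_, ?_⟩, ?_, by simp⟩
    · rw [hsum]; omega
    · intro j hj
      rw [Finset.mem_range]
      by_contra hc
      rw [dif_neg (by omega)] at hj
      exact hj rfl
    · rw [hwsum]; omega
  · -- hj : reverse map into A
    intro p hp
    rw [Finset.mem_sigma, Finset.mem_filter, Finset.mem_piAntidiag] at hp
    obtain ⟨hm, ⟨hk1, hk2⟩, hk3, hk4⟩ := hp
    rw [Finset.mem_range] at hm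
    rw [← Fin.sum_univ_eq_sum_range p.2 (r + 1), Fin.sum_univ_succ] at hk1
    simp only [Fin.val_zero, Fin.val_succ] at hk1
    rw [hk4] at hk1
    rw [← Fin.sum_univ_eq_sum_range (fun j => j * p.2 j) (r + 1), Fin.sum_univ_succ] at hk3
    simp only [Fin.val_zero, Fin.val_succ, zero_mul, zero_add] at hk1 hk3
    rw [Finset.mem_filter, Finset.Nat.mem_antidiagonalTuple]
    constructor
    · rw [Fin.sum_univ_succ]
      simp only [Fin.val_zero, Fin.val_succ, if_true, Nat.succ_ne_zero, if_false, reduceIte]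
      omega
    · rw [Fin.sum_univ_succ]
      simp only [Fin.val_zero, Fin.val_succ, if_true, Nat.succ_ne_zero, if_false, reduceIte]
      have : ∑ i : Fin r, (i.1 + 1 + 1) * p.2 (i.1 + 1)
          = ∑ i : Fin r, (i.1 + 1) * p.2 (i.1 + 1) + ∑ i : Fin r, p.2 (i.1 + 1) := by
        rw [← Finset.sum_add_distrib]
        exact Finset.sum_congr rfl fun i _ => by ring
      rw [this]
      omega
  · -- left_inv
    intro b hb
    dsimp only
    rw [Finset.mem_filter, Finset.Nat.mem_antidiagonalTuple] at hb
    obtain ⟨hb1, _⟩ := hb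
    have hb0 : b 0 ≤ r := by
      rw [Fin.sum_univ_succ] at hb1; omega
    funext i
    by_cases h : i.1 = 0
    · have : i = 0 := Fin.ext h
      subst this
      simp only [Fin.val_zero, if_true, reduceIte]
      omega
    · simp only [if_neg h]
      rw [dif_pos ⟨Nat.pos_of_ne_zero h, i.isLt⟩, Fin.eta]
  · -- right_inv
    intro p hp
    rw [Finset.mem_sigma, Finset.mem_filter, Finset.mem_piAntidiag] at hp
    obtain ⟨hm, ⟨hk1, hk2⟩, hk3, hk4⟩ := hp
    rw [Finset.mem_range] at hm
    obtain ⟨m, k⟩ := p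
    dsimp only at hm hk1 hk2 hk3 hk4 ⊢
    refine Sigma.ext ?_ (heq_of_eq ?_)
    · dsimp only
      simp only [Fin.val_zero, if_true, reduceIte]
      omega
    · dsimp only
      funext j
      by_cases h : 0 < j ∧ j < r + 1
      · rw [dif_pos h]
        rw [if_neg (by simpa using (by omega : ¬ j = 0))]
      · rw [dif_neg h]
        rcases Nat.eq_zero_or_pos j with h0 | h0
        · rw [h0, hk4]
        · by_contra hc
          have := hk2 j (fun hx => hc hx.symm)
          rw [Finset.mem_range] at this
          omega
  · -- term equality
    intro b hb
    dsimp only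
    rw [Finset.mem_filter, Finset.Nat.mem_antidiagonalTuple] at hb
    obtain ⟨hb1, hb2⟩ := hb
    have hb0 : b 0 ≤ r := by
      rw [Fin.sum_univ_succ] at hb1; omega
    have keval : ∀ i : Fin (r + 1),
        (if h : 0 < i.1 ∧ i.1 < r + 1 then b ⟨i.1, h.2⟩ else 0) = if i.1 = 0 then 0 else b i := by
      intro i
      by_cases h : i.1 = 0
      · simp [h]
      · rw [dif_pos ⟨Nat.pos_of_ne_zero h, i.isLt⟩, if_neg h, Fin.eta]
    -- sum of k over range = r - b 0
    have hsum : ∑ j ∈ Finset.range (r + 1), (if h : 0 < j ∧ j < r + 1 then b ⟨j, h.2⟩ else 0)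
        = r - b 0 := by
      rw [← Fin.sum_univ_eq_sum_range
        (fun j => if h : 0 < j ∧ j < r + 1 then b ⟨j, h.2⟩ else 0) (r + 1)]
      rw [Finset.sum_congr rfl fun i _ => keval i, Fin.sum_univ_succ]
      simp only [Fin.val_zero, Fin.val_succ, if_true, Nat.succ_ne_zero, if_false, reduceIte]
      rw [Fin.sum_univ_succ] at hb1
      omega
    -- product of vA
    have hprod : ∏ j ∈ Finset.range (r + 1),
          vA s j ^ (if h : 0 < j ∧ j < r + 1 then b ⟨j, h.2⟩ else 0)
        = ∏ i : Fin r, s (i.succ.1 + 1) ^ b i.succ := by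
      rw [← Fin.prod_univ_eq_prod_range
        (fun j => vA s j ^ (if h : 0 < j ∧ j < r + 1 then b ⟨j, h.2⟩ else 0)) (r + 1)]
      rw [Finset.prod_congr rfl fun i _ => by rw [keval i], Fin.prod_univ_succ]
      simp only [Fin.val_zero, Fin.val_succ, if_true, Nat.succ_ne_zero, if_false, reduceIte,
        pow_zero, one_mul]
      refine Finset.prod_congr rfl fun i _ => ?_
      rw [vA, if_neg (Nat.succ_ne_zero _)]
    -- factorial products
    have hDfil : ∏ i ∈ Finset.univ.filter (fun i : Fin (r + 1) => 0 < i.1),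
          ((Nat.factorial (b i)) : ℂ)
        = ∏ i : Fin r, ((Nat.factorial (b i.succ)) : ℂ) := by
      rw [Finset.prod_filter, Fin.prod_univ_succ]
      simp only [Fin.val_zero, lt_irrefl, if_false, one_mul, Fin.val_succ]
      refine Finset.prod_congr rfl fun i _ => ?_
      rw [if_pos (Nat.succ_pos _)]
    have hDnat : ∏ j ∈ Finset.range (r + 1),
          Nat.factorial (if h : 0 < j ∧ j < r + 1 then b ⟨j, h.2⟩ else 0)
        = ∏ i : Fin r, Nat.factorial (b i.succ) := by
      rw [← Fin.prod_univ_eq_prod_range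
        (fun j => Nat.factorial (if h : 0 < j ∧ j < r + 1 then b ⟨j, h.2⟩ else 0)) (r + 1)]
      rw [Finset.prod_congr rfl fun i _ => by rw [keval i], Fin.prod_univ_succ]
      simp only [Fin.val_zero, Fin.val_succ, if_true, Nat.succ_ne_zero, if_false, reduceIte,
        Nat.factorial_zero, one_mul]
    have hspec := Nat.multinomial_spec (Finset.range (r + 1))
      (fun j => if h : 0 < j ∧ j < r + 1 then b ⟨j, h.2⟩ else 0)
    rw [hsum, hDnat] at hspec
    -- full product of s over Fin (r+1)
    have hfull : ∏ i : Fin (r + 1), s (i.1 + 1) ^ b i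
        = s 1 ^ b 0 * ∏ i : Fin r, s (i.succ.1 + 1) ^ b i.succ := by
      rw [Fin.prod_univ_succ]
      norm_num
    have hr : r - (r - b 0) = b 0 := by omega
    simp only [hr, hprod, hDfil]
    have hDne : (∏ i : Fin r, ((Nat.factorial (b i.succ)) : ℂ)) ≠ 0 := by
      rw [← Nat.cast_prod]
      exact Nat.cast_ne_zero.mpr (Finset.prod_ne_zero_iff.mpr
        fun i _ => (Nat.factorial_pos _).ne')
    have hcast : ((Nat.factorial (r - b 0)) : ℂ)
        = (∏ i : Fin r, ((Nat.factorial (b i.succ)) : ℂ)) *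
          ((Nat.multinomial (Finset.range (r + 1))
            (fun j => if h : 0 < j ∧ j < r + 1 then b ⟨j, h.2⟩ else 0)) : ℂ) := by
      rw [← Nat.cast_prod, ← Nat.cast_mul, hspec]
    rw [hfull, hcast]
    field_simp

lemma coeff_uA (s : ℕ → ℂ) (N i : ℕ) (h : i ≤ N) : (uA s N).coeff i = vA s i := by
  rw [uA, Polynomial.finset_sum_coeff]
  simp only [Polynomial.coeff_C_mul, Polynomial.coeff_X_pow, mul_ite, mul_one, mul_zero]
  rw [Finset.sum_ite_eq (Finset.range (N + 1)) i (fun j => vA s j),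
    if_pos (Finset.mem_range.mpr (by omega))]

lemma coefid (c : ℂ) (hc : c ≠ 0) (j m : ℕ) (hm : m ≤ j) :
    c⁻¹ * (-c⁻¹) ^ m = (-1 : ℂ) ^ j / c ^ (j + 1) * ((-1 : ℂ) ^ (j - m) * c ^ (j - m)) := by
  rw [neg_pow, inv_pow, div_mul_eq_mul_div, eq_div_iff (pow_ne_zero _ hc)]
  have h1 : c ^ (j + 1) = c ^ (m + 1) * c ^ (j - m) := by
    rw [← pow_add]; congr 1; omega
  have h1' : c⁻¹ * (c ^ m)⁻¹ * c ^ (j + 1) = c ^ (j - m) := by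
    rw [h1, pow_succ]
    field_simp
  have h2 : (-1 : ℂ) ^ j * (-1 : ℂ) ^ (j - m) = (-1 : ℂ) ^ m := by
    rw [← pow_add]
    have : j + (j - m) = m + 2 * (j - m) := by omega
    rw [this, pow_add, pow_mul]
    norm_num
  linear_combination ((-1 : ℂ) ^ m) * h1' - (c ^ (j - m)) * h2

lemma coeff_T (s : ℕ → ℂ) (hs : s 1 ≠ 0) (n j : ℕ) (hj : j ≤ n) :
    (Polynomial.C ((s 1)⁻¹) *
        ∑ m ∈ Finset.range (n + 1), (Polynomial.C (-(s 1)⁻¹) * uA s n) ^ m).coeff j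
      = (-1 : ℂ) ^ j / (s 1) ^ (j + 1) * hFun s j := by
  rw [Polynomial.coeff_C_mul, Polynomial.finset_sum_coeff]
  have hterm : ∀ m, ((Polynomial.C (-(s 1)⁻¹) * uA s n) ^ m).coeff j
      = (-(s 1)⁻¹) ^ m * ((uA s n) ^ m).coeff j := by
    intro m; rw [mul_pow, ← Polynomial.C_pow, Polynomial.coeff_C_mul]
  rw [Finset.sum_congr rfl fun m _ => hterm m]
  rw [← Finset.sum_subset (Finset.range_subset_range.mpr (Nat.succ_le_succ hj))
    (fun m hm hnm => by
      rw [coeff_uA_pow_lt s n m j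
        (by rw [Finset.mem_range] at hm hnm; omega), mul_zero])]
  rw [hFun_eq_sum_QA, Finset.mul_sum, Finset.mul_sum]
  refine Finset.sum_congr rfl fun m hm => ?_
  rw [Finset.mem_range] at hm
  have hm' : m ≤ j := by omega
  rw [coeff_uA_pow_stable s n m j hj, coeff_uA_pow_eq_QA]
  linear_combination (QA s m j) * coefid (s 1) hs j m hm'

lemma delta_sum (s : ℕ → ℂ) (hs : s 1 ≠ 0) (n : ℕ) :
    ∑ r ∈ Finset.range (n + 1), ((-1 : ℂ) ^ r / (s 1) ^ (r + 1) * hFun s r) * s (n - r + 1)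
      = if n = 0 then 1 else 0 := by
  have hX : ∀ p : Polynomial ℂ, (X : Polynomial ℂ) ^ (n + 1) ∣ p → p.coeff n = 0 := by
    rintro p ⟨q, hq⟩
    rw [hq, mul_comm, Polynomial.coeff_mul_X_pow', if_neg (by omega)]
  set u := uA s n with hu
  set x := Polynomial.C (-(s 1)⁻¹) * u with hx
  set T := Polynomial.C ((s 1)⁻¹) * ∑ m ∈ Finset.range (n + 1), x ^ m with hT
  have hSx : Polynomial.C (s 1) + u = Polynomial.C (s 1) * (1 - x) := by
    rw [hx, mul_sub, mul_one, ← mul_assoc, ← Polynomial.C_mul]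
    have : s 1 * -(s 1)⁻¹ = -1 := by field_simp
    rw [this]
    simp only [map_neg, Polynomial.C_1, neg_mul, one_mul, sub_neg_eq_add]
  have hgeom : (1 - x) * ∑ m ∈ Finset.range (n + 1), x ^ m = 1 - x ^ (n + 1) := by
    have h := geom_sum_mul x (n + 1)
    linear_combination -h
  have hST : (Polynomial.C (s 1) + u) * T = 1 - x ^ (n + 1) := by
    calc (Polynomial.C (s 1) + u) * T
        = (Polynomial.C (s 1) * Polynomial.C ((s 1)⁻¹)) *
          ((1 - x) * ∑ m ∈ Finset.range (n + 1), x ^ m) := by rw [hSx, hT]; ring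
      _ = 1 - x ^ (n + 1) := by
          rw [← Polynomial.C_mul, mul_inv_cancel₀ hs, Polynomial.C_1, one_mul, hgeom]
  have hco := congrArg (fun p => p.coeff n) hST
  simp only [Polynomial.coeff_sub, Polynomial.coeff_one] at hco
  rw [hX _ (pow_dvd_pow_of_dvd ((X_dvd_uA s n).mul_left _) (n + 1)), sub_zero] at hco
  rw [Polynomial.coeff_mul, Finset.Nat.sum_antidiagonal_eq_sum_range_succ_mk] at hco
  have hterm : ∀ i ∈ Finset.range (n + 1),
      (Polynomial.C (s 1) + u).coeff i * T.coeff (n - i)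
        = s (i + 1) * ((-1 : ℂ) ^ (n - i) / (s 1) ^ ((n - i) + 1) * hFun s (n - i)) := by
    intro i hi
    rw [Finset.mem_range] at hi
    have hScoeff : (Polynomial.C (s 1) + u).coeff i = s (i + 1) := by
      rw [Polynomial.coeff_add, Polynomial.coeff_C, hu, coeff_uA s n i (by omega), vA]
      by_cases h : i = 0
      · subst h; simp
      · rw [if_neg h, if_neg h, zero_add]
    rw [hScoeff, hT, hx, hu, coeff_T s hs n (n - i) (by omega)]
  rw [Finset.sum_congr rfl hterm] at hco
  rw [← Finset.sum_range_reflect]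
  rw [← hco]
  refine Finset.sum_congr rfl fun i hi => ?_
  rw [Finset.mem_range] at hi
  have h1 : n + 1 - 1 - i = n - i := by omega
  have h2 : n - (n - i) = i := by omega
  rw [h1, h2, mul_comm]

theorem inversion_formula (s f g : ℕ → ℂ) (hs : s 1 ≠ 0)
    (hg : ∀ k : ℕ, g k = ∑ r ∈ Finset.range (k + 1), s (k - r + 1) * f r) :
    ∀ k : ℕ, f k = ∑ r ∈ Finset.range (k + 1),
      ((-1 : ℂ) ^ r / (s 1) ^ (r + 1)) * hFun s r * g (k - r) := by
  intro k
  calc f k = ∑ q ∈ Finset.range (k + 1), (if k - q = 0 then (1 : ℂ) else 0) * f q := by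
        rw [Finset.sum_eq_single_of_mem k (Finset.self_mem_range_succ k)]
        · simp
        · intro q hq hne
          rw [Finset.mem_range] at hq
          rw [if_neg (by omega), zero_mul]
    _ = ∑ q ∈ Finset.range (k + 1),
          (∑ r ∈ Finset.range ((k - q) + 1),
            ((-1 : ℂ) ^ r / (s 1) ^ (r + 1) * hFun s r) * s ((k - q) - r + 1)) * f q := by
        refine Finset.sum_congr rfl fun q hq => ?_
        rw [delta_sum s hs (k - q)]
    _ = ∑ q ∈ Finset.range (k + 1), ∑ r ∈ Finset.range (k - q + 1),
          ((-1 : ℂ) ^ r / (s 1) ^ (r + 1) * hFun s r) * (s (k - r - q + 1) * f q) := by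
        refine Finset.sum_congr rfl fun q hq => ?_
        rw [Finset.sum_mul]
        refine Finset.sum_congr rfl fun r hr => ?_
        have : k - q - r = k - r - q := by omega
        rw [this]
        ring
    _ = ∑ r ∈ Finset.range (k + 1), ∑ q ∈ Finset.range (k - r + 1),
          ((-1 : ℂ) ^ r / (s 1) ^ (r + 1) * hFun s r) * (s (k - r - q + 1) * f q) := by
        refine Finset.sum_comm' fun q r => ?_
        simp only [Finset.mem_range]
        omega
    _ = ∑ r ∈ Finset.range (k + 1),
          ((-1 : ℂ) ^ r / (s 1) ^ (r + 1)) * hFun s r * g (k - r) := by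
        refine Finset.sum_congr rfl fun r hr => ?_
        rw [← Finset.mul_sum, hg (k - r), mul_assoc]
end

section
/- For $r \geq 0$ defined by $h(r) = \sum (-1)^{b_1} \prod_{i=1}^{r+1} s(i)^{b_i} \frac{(r-b_1)!}{b_2!\cdots b_{r+1}!}$ (sum over non-negative integer solutions of $\sum i\,b_i = 2r$, $\sum b_i = r$), one has $h(0) = 1$, and for every $\ell \geq 0$ the recurrence $\sum_{i=0}^{\ell} (-1)^i \frac{s(\ell-i+2)}{s(1)^{i+1}} h(i) = \frac{(-1)^{\ell}}{s(1)^{\ell+1}} h(\ell+1)$ holds. -/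
open Finset

namespace HFunAux

lemma prod_filter_pos {M : Type*} [CommMonoid M] {m : ℕ} (f : Fin (m+1) → M) :
    ∏ i ∈ Finset.univ.filter (fun i : Fin (m+1) => 0 < i.1), f i = ∏ i : Fin m, f i.succ := by
  have h : Finset.univ.filter (fun i : Fin (m+1) => 0 < i.1)
      = Finset.univ.map (Fin.succEmb m) := by
    ext i
    simp only [mem_filter, mem_univ, true_and, Finset.mem_map]
    constructor
    · intro hi
      have hne : i ≠ 0 := by
        intro h; subst h; simp at hi
      obtain ⟨j, rfl⟩ := Fin.eq_succ_of_ne_zero hne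
      exact ⟨j, rfl⟩
    · rintro ⟨j, -, rfl⟩
      simp [Fin.succ_pos]
  rw [h, Finset.prod_map]
  rfl

def pset (n r : ℕ) : Finset (Fin (n+1) → ℕ) :=
  (Finset.Nat.antidiagonalTuple (n+1) r).filter
    (fun b => ∑ i : Fin (n+1), (i.1 + 1) * b i = 2 * r)

noncomputable def wt (s : ℕ → ℂ) (r : ℕ) {n : ℕ} (b : Fin (n+1) → ℕ) : ℂ :=
  (-1 : ℂ) ^ (b 0) * (∏ i : Fin (n+1), (s (i.1 + 1)) ^ (b i)) *
    (Nat.factorial (r - b 0) : ℂ) / ∏ i : Fin n, (Nat.factorial (b i.succ) : ℂ)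

lemma hFun_eq (s : ℕ → ℂ) (r : ℕ) : hFun s r = ∑ b ∈ pset r r, wt s r b := by
  unfold hFun pset wt
  refine Finset.sum_congr rfl fun b hb => ?_
  rw [prod_filter_pos]

lemma mem_pset {n r : ℕ} {b : Fin (n+1) → ℕ} :
    b ∈ pset n r ↔ (∑ i, b i = r ∧ ∑ i : Fin (n+1), (i.1 + 1) * b i = 2 * r) := by
  simp [pset, Finset.Nat.mem_antidiagonalTuple, and_comm]


lemma pset_facts {n r : ℕ} {b : Fin (n+1) → ℕ} (hb : b ∈ pset n r) :
    b 0 = ∑ i : Fin n, i.1 * b i.succ ∧ b 0 + ∑ i : Fin n, b i.succ = r := by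
  obtain ⟨h1, h2⟩ := mem_pset.mp hb
  rw [Fin.sum_univ_succ] at h1
  rw [Fin.sum_univ_succ] at h2
  have e : ∀ i : Fin n, (i.succ.1 + 1) * b i.succ = i.1 * b i.succ + 2 * b i.succ := by
    intro i; simp [Fin.val_succ]; ring
  rw [Finset.sum_congr rfl (fun i _ => e i), Finset.sum_add_distrib, ← Finset.mul_sum] at h2
  simp only [Fin.val_zero, zero_add, one_mul] at h2
  omega

lemma b0_le {n r : ℕ} {b : Fin (n+1) → ℕ} (hb : b ∈ pset n r) : b 0 ≤ r := by
  obtain ⟨-, h2⟩ := pset_facts hb; omega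

lemma b0_lt {n r : ℕ} {b : Fin (n+1) → ℕ} (hb : b ∈ pset n r) (hr : 0 < r) : b 0 < r := by
  obtain ⟨h1, h2⟩ := pset_facts hb
  rcases Nat.eq_zero_or_pos (∑ i : Fin n, b i.succ) with h | h
  · rw [Finset.sum_eq_zero_iff] at h
    have : ∑ i : Fin n, i.1 * b i.succ = 0 :=
      Finset.sum_eq_zero (fun i hi => by rw [h i hi, mul_zero])
    omega
  · omega

lemma b0_ge {n r : ℕ} {b : Fin (n+1) → ℕ} (hb : b ∈ pset n r)
    {j : Fin (n+1)} (hj : j ≠ 0) (hbj : 0 < b j) : j.1 - 1 ≤ b 0 := by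
  obtain ⟨h1, -⟩ := pset_facts hb
  obtain ⟨k, rfl⟩ := Fin.eq_succ_of_ne_zero hj
  have : k.1 * b k.succ ≤ ∑ i : Fin n, i.1 * b i.succ :=
    Finset.single_le_sum (f := fun i : Fin n => i.1 * b i.succ)
      (fun i _ => Nat.zero_le _) (mem_univ k)
  have hk : k.succ.1 = k.1 + 1 := rfl
  have : k.1 * 1 ≤ k.1 * b k.succ := Nat.mul_le_mul_left _ hbj
  omega

lemma vanish {n r : ℕ} {b : Fin (n+1) → ℕ} (hb : b ∈ pset n r)
    {j : Fin (n+1)} (hj : r < j.1) : b j = 0 := by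
  rcases Nat.eq_zero_or_pos r with hr | hr
  · subst hr
    obtain ⟨h1, -⟩ := mem_pset.mp hb
    exact (Finset.sum_eq_zero_iff.mp h1) j (mem_univ j)
  · by_contra h
    have hbj : 0 < b j := Nat.pos_of_ne_zero h
    have hj0 : j ≠ 0 := by
      intro e; subst e; simp at hj
    have := b0_ge hb hj0 hbj
    have := b0_lt hb hr
    omega


lemma pad_succ (s : ℕ → ℂ) (r n : ℕ) (h : r ≤ n) :
    ∑ b ∈ pset n r, wt s r b = ∑ b ∈ pset (n+1) r, wt s r b := by
  refine Finset.sum_nbij' (fun b => Fin.snoc b 0) (fun b => b ∘ Fin.castSucc) ?_ ?_ ?_ ?_ ?_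
  · intro b hb
    obtain ⟨h1, h2⟩ := mem_pset.mp hb
    rw [mem_pset]
    constructor
    · rw [Fin.sum_univ_castSucc]
      simp [Fin.snoc_castSucc, h1]
    · rw [Fin.sum_univ_castSucc]
      simpa [Fin.snoc_castSucc] using h2
  · intro b hb
    obtain ⟨h1, h2⟩ := mem_pset.mp hb
    have hlast : b (Fin.last (n+1)) = 0 := vanish hb (by simp [Fin.last]; omega)
    rw [mem_pset]
    rw [Fin.sum_univ_castSucc, hlast] at h1 h2
    constructor
    · simpa using h1
    · simpa using h2
  · intro b hb
    funext i
    simp [Function.comp, Fin.snoc_castSucc]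
  · intro b hb
    have hlast : b (Fin.last (n+1)) = 0 := vanish hb (by simp [Fin.last]; omega)
    funext i
    rcases Fin.eq_castSucc_or_eq_last i with ⟨j, rfl⟩ | rfl
    · simp [Function.comp, Fin.snoc_castSucc]
    · simp [Fin.snoc_last, hlast]
  · intro b hb
    unfold wt
    have h0 : (Fin.snoc b 0 : Fin (n+2) → ℕ) 0 = b 0 := by
      have : (0 : Fin (n+2)) = Fin.castSucc 0 := rfl
      rw [this, Fin.snoc_castSucc]
    rw [h0]
    congr 1
    · congr 1
      conv_rhs => rw [Fin.prod_univ_castSucc]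
      simp [Fin.snoc_castSucc]
    · have he : ∀ i : Fin n, (Fin.snoc b 0 : Fin (n+2) → ℕ) (Fin.castSucc i).succ = b i.succ := by
        intro i
        rw [Fin.succ_castSucc, Fin.snoc_castSucc]
      have hl : ((Fin.last n).succ : Fin (n+2)) = Fin.last (n+1) := by
        ext; simp [Fin.last]
      conv_rhs => rw [Fin.prod_univ_castSucc]
      simp [he, hl, Fin.snoc_last]

lemma pad (s : ℕ → ℂ) {r n : ℕ} (h : r ≤ n) :
    hFun s r = ∑ b ∈ pset n r, wt s r b := by
  rw [hFun_eq]
  induction n, h using Nat.le_induction with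
  | base => rfl
  | succ n hn ih => rw [ih, pad_succ s r n hn]


lemma wt_split (s : ℕ → ℂ) {n r : ℕ} (hr : 0 < r) {b : Fin (n+1) → ℕ} (hb : b ∈ pset n r) :
    wt s r b = ∑ j ∈ Finset.univ.filter (fun j : Fin (n+1) => j ≠ 0 ∧ 0 < b j),
      (-1:ℂ)^(b 0) * (∏ i : Fin (n+1), (s (i.1+1)) ^ (b i)) *
        ((Nat.factorial (r - 1 - b 0)) : ℂ) * ((b j : ℕ) : ℂ) /
        ∏ i : Fin n, (Nat.factorial (b i.succ) : ℂ) := by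
  unfold wt
  set P : ℂ := ∏ i : Fin (n+1), (s (i.1+1)) ^ (b i) with hP
  set D : ℂ := ∏ i : Fin n, (Nat.factorial (b i.succ) : ℂ) with hD
  have hterm : ∀ j : Fin (n+1),
      (-1:ℂ)^(b 0) * P * ((Nat.factorial (r - 1 - b 0)) : ℂ) * ((b j : ℕ) : ℂ) / D
        = ((b j : ℕ) : ℂ) * ((-1:ℂ)^(b 0) * P * ((Nat.factorial (r - 1 - b 0)) : ℂ) / D) := by
    intro j; ring
  rw [Finset.sum_congr rfl (fun j _ => hterm j), ← Finset.sum_mul]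
  have hsum : ∑ j ∈ Finset.univ.filter (fun j : Fin (n+1) => j ≠ 0 ∧ 0 < b j),
      ((b j : ℕ) : ℂ) = ((r - b 0 : ℕ) : ℂ) := by
    rw [← Nat.cast_sum]
    congr 1
    have h1 : ∑ j ∈ Finset.univ.filter (fun j : Fin (n+1) => j ≠ 0 ∧ 0 < b j), b j
        = ∑ j ∈ Finset.univ.filter (fun j : Fin (n+1) => j ≠ 0), b j := by
      apply Finset.sum_subset
      · intro j hj
        simp only [mem_filter, mem_univ, true_and] at hj ⊢
        exact hj.1
      · intro j hj hj2
        simp only [mem_filter, mem_univ, true_and, not_and, not_lt] at hj hj2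
        omega
    rw [h1]
    have h2 : Finset.univ.filter (fun j : Fin (n+1) => j ≠ 0)
        = Finset.univ.map (Fin.succEmb n) := by
      ext i
      simp only [mem_filter, mem_univ, true_and, Finset.mem_map]
      constructor
      · intro hi
        obtain ⟨j, rfl⟩ := Fin.eq_succ_of_ne_zero hi
        exact ⟨j, rfl⟩
      · rintro ⟨j, -, rfl⟩
        exact Fin.succ_ne_zero j
    rw [h2, Finset.sum_map]
    obtain ⟨-, h3⟩ := pset_facts hb
    have h4 : ∑ x : Fin n, b ((Fin.succEmb n) x) = ∑ i : Fin n, b i.succ := rfl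
    omega
  rw [hsum]
  have hpos : 0 < r - b 0 := by have := b0_lt hb hr; omega
  have h2 : ((r - b 0 : ℕ) : ℂ) * ((Nat.factorial (r - 1 - b 0)) : ℂ)
      = ((Nat.factorial (r - b 0)) : ℂ) := by
    have h3 : r - 1 - b 0 = (r - b 0) - 1 := by omega
    rw [h3]
    exact_mod_cast Nat.mul_factorial_pred hpos.ne'
  rw [← h2]
  ring


lemma sum_pattern {m : ℕ} (b : Fin (m+1) → ℕ) (c d : ℕ) (j : Fin (m+1)) :
    ∑ t, (b t + (if t = 0 then c else 0) + (if t = j then d else 0))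
      = (∑ t, b t) + c + d := by
  rw [Finset.sum_add_distrib, Finset.sum_add_distrib, Finset.sum_ite_eq', Finset.sum_ite_eq']
  simp

lemma wsum_pattern {m : ℕ} (b : Fin (m+1) → ℕ) (c d : ℕ) (j : Fin (m+1)) :
    ∑ t : Fin (m+1), (t.1+1) * (b t + (if t = 0 then c else 0) + (if t = j then d else 0))
      = (∑ t : Fin (m+1), (t.1+1) * b t) + c + (j.1+1) * d := by
  simp only [mul_add, mul_ite, mul_zero]
  rw [Finset.sum_add_distrib, Finset.sum_add_distrib, Finset.sum_ite_eq', Finset.sum_ite_eq']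
  simp


def fwdJ (ℓ i : ℕ) : Fin (ℓ+2) := ⟨ℓ - i + 1, by omega⟩

def fwdMap (ℓ : ℕ) (p : Σ _ : ℕ, (Fin (ℓ+2) → ℕ)) : Σ _ : (Fin (ℓ+2) → ℕ), Fin (ℓ+2) :=
  ⟨fun t => p.2 t + (if t = 0 then ℓ - p.1 else 0) + (if t = fwdJ ℓ p.1 then 1 else 0),
    fwdJ ℓ p.1⟩

def bwdMap (ℓ : ℕ) (q : Σ _ : (Fin (ℓ+2) → ℕ), Fin (ℓ+2)) : Σ _ : ℕ, (Fin (ℓ+2) → ℕ) :=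
  ⟨ℓ + 1 - q.2.1, fun t => q.1 t - (if t = 0 then q.2.1 - 1 else 0) - (if t = q.2 then 1 else 0)⟩

lemma fwdJ_ne_zero (ℓ i : ℕ) : fwdJ ℓ i ≠ 0 := by
  intro h
  have := congrArg Fin.val h
  simp [fwdJ] at this

lemma term_eq (s : ℕ → ℂ) (ℓ i : ℕ) (hile : i ≤ ℓ) (b : Fin (ℓ+2) → ℕ)
    (hb : b ∈ pset (ℓ+1) i) :
    (-1:ℂ)^(ℓ-i) * s (ℓ-i+2) * s 1 ^ (ℓ-i) * wt s i b
      = (-1:ℂ)^((fwdMap ℓ ⟨i,b⟩).1 0) *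
          (∏ t : Fin (ℓ+2), s (t.1+1) ^ ((fwdMap ℓ ⟨i,b⟩).1 t)) *
          ((Nat.factorial (ℓ+1-1-(fwdMap ℓ ⟨i,b⟩).1 0)) : ℂ) *
          (((fwdMap ℓ ⟨i,b⟩).1 ((fwdMap ℓ ⟨i,b⟩).2) : ℕ) : ℂ) /
          ∏ t : Fin (ℓ+1), ((Nat.factorial ((fwdMap ℓ ⟨i,b⟩).1 t.succ)) : ℂ) := by
  obtain ⟨h1, h2⟩ := mem_pset.mp hb
  have hb0 : b 0 ≤ i := b0_le hb
  have hj0 : fwdJ ℓ i ≠ 0 := fwdJ_ne_zero ℓ i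
  have hjv : (fwdJ ℓ i).1 = ℓ - i + 1 := rfl
  have h00 : ¬((0 : Fin (ℓ+2)) = fwdJ ℓ i) := fun h => hj0 h.symm
  set b' : Fin (ℓ+2) → ℕ := (fwdMap ℓ ⟨i,b⟩).1 with hb'def
  have hj2 : (fwdMap ℓ ⟨i,b⟩).2 = fwdJ ℓ i := rfl
  have hbt : ∀ t, b' t = b t + (if t = 0 then ℓ - i else 0) +
      (if t = fwdJ ℓ i then 1 else 0) := fun t => rfl
  have e0 : b' 0 = b 0 + (ℓ - i) := by rw [hbt 0]; simp [h00]
  have ej : b' (fwdJ ℓ i) = b (fwdJ ℓ i) + 1 := by rw [hbt]; simp [hj0]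
  have efac : ℓ + 1 - 1 - b' 0 = i - b 0 := by rw [e0]; omega
  have esign : (-1:ℂ)^(b' 0) = (-1:ℂ)^(b 0) * (-1:ℂ)^(ℓ - i) := by rw [e0, pow_add]
  have eprod : ∏ t : Fin (ℓ+2), s (t.1+1) ^ (b' t)
      = (∏ t : Fin (ℓ+2), s (t.1+1) ^ (b t)) * s 1 ^ (ℓ - i) * s (ℓ - i + 2) := by
    have hpw : ∀ t : Fin (ℓ+2), s (t.1+1) ^ (b' t)
        = s (t.1+1) ^ (b t) * (if t = 0 then s (t.1+1) ^ (ℓ - i) else 1) *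
          (if t = fwdJ ℓ i then s (t.1+1) else 1) := by
      intro t
      rw [hbt t]
      simp only [pow_add, pow_ite, pow_zero, pow_one]
    rw [Finset.prod_congr rfl (fun t _ => hpw t), Finset.prod_mul_distrib,
        Finset.prod_mul_distrib, Finset.prod_ite_eq', Finset.prod_ite_eq']
    simp [hjv]
  have hk0lt : ℓ - i < ℓ + 1 := by omega
  set k₀ : Fin (ℓ+1) := ⟨ℓ - i, hk0lt⟩ with hk₀def
  have hks : k₀.succ = fwdJ ℓ i := by
    apply Fin.ext
    show ℓ - i + 1 = (fwdJ ℓ i).1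
    rw [hjv]
  have eden : ∏ t : Fin (ℓ+1), ((Nat.factorial (b' t.succ)) : ℂ)
      = ((b (fwdJ ℓ i) + 1 : ℕ) : ℂ) * ∏ t : Fin (ℓ+1), ((Nat.factorial (b t.succ)) : ℂ) := by
    rw [← Finset.mul_prod_erase Finset.univ
          (fun t : Fin (ℓ+1) => ((Nat.factorial (b' t.succ)) : ℂ)) (Finset.mem_univ k₀),
        ← Finset.mul_prod_erase Finset.univ
          (fun t : Fin (ℓ+1) => ((Nat.factorial (b t.succ)) : ℂ)) (Finset.mem_univ k₀),
        ← mul_assoc]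
    congr 1
    · simp only [hks, ej, Nat.factorial_succ]
      push_cast
      ring
    · refine Finset.prod_congr rfl (fun t ht => ?_)
      have htk : t ≠ k₀ := (Finset.mem_erase.mp ht).1
      have hz : ¬(t.succ = (0 : Fin (ℓ+2))) := Fin.succ_ne_zero t
      have hjne : ¬(t.succ = fwdJ ℓ i) := by
        rw [← hks]
        exact fun h => htk (Fin.succ_injective _ h)
      rw [hbt]
      simp [hz, hjne]
  have hDne : (∏ t : Fin (ℓ+1), ((Nat.factorial (b t.succ)) : ℂ)) ≠ 0 := by
    refine Finset.prod_ne_zero_iff.mpr (fun t _ => ?_)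
    exact_mod_cast (Nat.factorial_ne_zero _)
  have hcne : ((b (fwdJ ℓ i) + 1 : ℕ) : ℂ) ≠ 0 := by
    exact_mod_cast Nat.succ_ne_zero (b (fwdJ ℓ i))
  rw [hj2, esign, eprod, efac, ej, eden]
  unfold wt
  have hc2 : ((b (fwdJ ℓ i) : ℂ) + 1) ≠ 0 := by exact_mod_cast hcne
  have hPP : (∏ t : Fin (ℓ+2), s (t.1+1) ^ (b t)) = ∏ t : Fin (ℓ+1+1), s (t.1+1) ^ (b t) := rfl
  field_simp

lemma key (s : ℕ → ℂ) (ℓ : ℕ) :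
    ∑ i ∈ Finset.range (ℓ+1), ∑ b ∈ pset (ℓ+1) i,
        ((-1:ℂ)^(ℓ-i) * s (ℓ-i+2) * s 1 ^ (ℓ-i) * wt s i b)
      = ∑ b ∈ pset (ℓ+1) (ℓ+1), wt s (ℓ+1) b := by
  rw [Finset.sum_congr rfl (fun b hb => wt_split s (Nat.succ_pos ℓ) hb)]
  rw [Finset.sum_sigma' (Finset.range (ℓ+1)) (fun i => pset (ℓ+1) i)
      (fun i b => (-1:ℂ)^(ℓ-i) * s (ℓ-i+2) * s 1 ^ (ℓ-i) * wt s i b)]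
  rw [Finset.sum_sigma' (pset (ℓ+1) (ℓ+1))
      (fun b => Finset.univ.filter (fun j : Fin (ℓ+2) => j ≠ 0 ∧ 0 < b j))
      (fun b j => (-1:ℂ)^(b 0) * (∏ i : Fin (ℓ+2), (s (i.1+1)) ^ (b i)) *
        ((Nat.factorial (ℓ+1 - 1 - b 0)) : ℂ) * ((b j : ℕ) : ℂ) /
        ∏ i : Fin (ℓ+1), (Nat.factorial (b i.succ) : ℂ))]
  refine Finset.sum_nbij' (fwdMap ℓ) (bwdMap ℓ) ?_ ?_ ?_ ?_ ?_
  · -- forward maps-to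
    rintro ⟨i, b⟩ hp
    rw [Finset.mem_sigma] at hp
    obtain ⟨hi, hb⟩ := hp
    dsimp only at hi hb
    rw [Finset.mem_range] at hi
    have hile : i ≤ ℓ := by omega
    obtain ⟨h1, h2⟩ := mem_pset.mp hb
    rw [Finset.mem_sigma]
    have hj0 : fwdJ ℓ i ≠ 0 := fwdJ_ne_zero ℓ i
    have hjv : (fwdJ ℓ i).1 = ℓ - i + 1 := rfl
    constructor
    · show (fun t => b t + (if t = 0 then ℓ - i else 0) + (if t = fwdJ ℓ i then 1 else 0))
        ∈ pset (ℓ+1) (ℓ+1)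
      rw [mem_pset]
      constructor
      · rw [sum_pattern]; omega
      · rw [wsum_pattern, h2, hjv]; omega
    · simp only [fwdMap, Finset.mem_filter, Finset.mem_univ, true_and]
      refine ⟨hj0, ?_⟩
      simp [hj0]
  · -- backward maps-to
    rintro ⟨b, j⟩ hq
    rw [Finset.mem_sigma] at hq
    obtain ⟨hb, hj⟩ := hq
    dsimp only at hb hj
    simp only [Finset.mem_filter, Finset.mem_univ, true_and] at hj
    obtain ⟨hj0, hbj⟩ := hj
    have hjv : j.1 ≠ 0 := fun h => hj0 (Fin.ext h)
    have hjlt : j.1 < ℓ + 2 := j.2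
    have hge := b0_ge hb hj0 hbj
    obtain ⟨h1, h2⟩ := mem_pset.mp hb
    have hpt : ∀ t, b t = ((b t - (if t = 0 then j.1 - 1 else 0)) - (if t = j then 1 else 0))
        + (if t = 0 then j.1 - 1 else 0) + (if t = j then 1 else 0) := by
      intro t
      by_cases h0 : t = 0
      · subst h0
        have hne : ¬((0 : Fin (ℓ+2)) = j) := fun h => hj0 h.symm
        simp [hne] <;> omega
      · by_cases hjt : t = j
        · subst hjt
          simp [h0] <;> omega
        · simp [h0, hjt]
    have hs1 : ∑ t : Fin (ℓ+1+1), b t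
        = (∑ t, ((b t - (if t = 0 then j.1 - 1 else 0)) - (if t = j then 1 else 0)))
          + (j.1 - 1) + 1 := by
      rw [← sum_pattern (fun t => (b t - (if t = 0 then j.1 - 1 else 0)) - (if t = j then 1 else 0)) (j.1-1) 1 j]
      exact Finset.sum_congr rfl (fun t _ => hpt t)
    have hs2 : ∑ t : Fin (ℓ+1+1), (t.1+1) * b t
        = (∑ t : Fin (ℓ+1+1), (t.1+1) * ((b t - (if t = 0 then j.1 - 1 else 0)) - (if t = j then 1 else 0)))
          + (j.1 - 1) + (j.1 + 1) * 1 := by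
      rw [← wsum_pattern (fun t => (b t - (if t = 0 then j.1 - 1 else 0)) - (if t = j then 1 else 0)) (j.1-1) 1 j]
      exact Finset.sum_congr rfl (fun t _ => by rw [← hpt t])
    rw [Finset.mem_sigma]
    constructor
    · show ℓ + 1 - j.1 ∈ Finset.range (ℓ+1)
      rw [Finset.mem_range]; omega
    · show (fun t => (b t - (if t = 0 then j.1 - 1 else 0)) - (if t = j then 1 else 0))
        ∈ pset (ℓ+1) (ℓ + 1 - j.1)
      rw [mem_pset]
      constructor
      · omega
      · omega
  · -- left inverse
    rintro ⟨i, b⟩ hp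
    rw [Finset.mem_sigma] at hp
    obtain ⟨hi, hb⟩ := hp
    dsimp only at hi hb
    rw [Finset.mem_range] at hi
    have hile : i ≤ ℓ := by omega
    have hj0 : fwdJ ℓ i ≠ 0 := fwdJ_ne_zero ℓ i
    have hjv : (fwdJ ℓ i).1 = ℓ - i + 1 := rfl
    refine Sigma.ext ?_ (heq_of_eq ?_)
    · show ℓ + 1 - (fwdJ ℓ i).1 = i
      rw [hjv]; omega
    · show (fun t => ((b t + (if t = 0 then ℓ - i else 0) + (if t = fwdJ ℓ i then 1 else 0))
          - (if t = 0 then (fwdJ ℓ i).1 - 1 else 0)) - (if t = fwdJ ℓ i then 1 else 0)) = b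
      funext t
      by_cases h0 : t = 0
      · subst h0
        have hne : ¬((0 : Fin (ℓ+2)) = fwdJ ℓ i) := fun h => hj0 h.symm
        simp [hne, hjv] <;> omega
      · by_cases hjt : t = fwdJ ℓ i
        · subst hjt
          simp [h0] <;> omega
        · simp [h0, hjt]
  · -- right inverse
    rintro ⟨b, j⟩ hq
    rw [Finset.mem_sigma] at hq
    obtain ⟨hb, hj⟩ := hq
    dsimp only at hb hj
    simp only [Finset.mem_filter, Finset.mem_univ, true_and] at hj
    obtain ⟨hj0, hbj⟩ := hj
    have hjv : j.1 ≠ 0 := fun h => hj0 (Fin.ext h)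
    have hjlt : j.1 < ℓ + 2 := j.2
    have hge := b0_ge hb hj0 hbj
    have hjeq : fwdJ ℓ (ℓ + 1 - j.1) = j := by
      apply Fin.ext
      show ℓ - (ℓ + 1 - j.1) + 1 = j.1
      omega
    refine Sigma.ext ?_ (heq_of_eq ?_)
    · show (fun t => ((b t - (if t = 0 then j.1 - 1 else 0)) - (if t = j then 1 else 0))
          + (if t = 0 then ℓ - (ℓ + 1 - j.1) else 0)
          + (if t = fwdJ ℓ (ℓ + 1 - j.1) then 1 else 0)) = b
      funext t
      have hjval : (fwdJ ℓ (ℓ + 1 - j.1)).1 = j.1 := by rw [hjeq]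
      simp only [hjeq]
      by_cases h0 : t = 0
      · subst h0
        have hne : ¬((0 : Fin (ℓ+2)) = j) := fun h => hj0 h.symm
        simp [hne] <;> omega
      · by_cases hjt : t = j
        · subst hjt
          simp [h0] <;> omega
        · simp [h0, hjt]
    · show fwdJ ℓ (ℓ + 1 - j.1) = j
      exact hjeq
  · -- term equality
    rintro ⟨i, b⟩ hp
    rw [Finset.mem_sigma] at hp
    obtain ⟨hi, hb⟩ := hp
    dsimp only at hi hb
    rw [Finset.mem_range] at hi
    have hile : i ≤ ℓ := by omega
    exact term_eq s ℓ i hile b hb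

end HFunAux


lemma hFun_zero (s : ℕ → ℂ) : hFun s 0 = 1 := by
  rw [HFunAux.hFun_eq]
  have h1 : HFunAux.pset 0 0 = {(0 : Fin 1 → ℕ)} := by
    rw [HFunAux.pset, Finset.Nat.antidiagonalTuple_zero_right, Finset.filter_singleton]
    simp
  rw [h1, Finset.sum_singleton]
  simp [HFunAux.wt]


theorem hFun_zero_and_recurrence (s : ℕ → ℂ) (hs : s 1 ≠ 0) :
    hFun s 0 = 1 ∧
    ∀ ℓ : ℕ, ∑ i ∈ Finset.range (ℓ + 1),
        (-1 : ℂ) ^ i * s (ℓ - i + 2) / (s 1) ^ (i + 1) * hFun s i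
      = (-1 : ℂ) ^ ℓ / (s 1) ^ (ℓ + 1) * hFun s (ℓ + 1) := by
  refine ⟨hFun_zero s, fun ℓ => ?_⟩
  have hcoef : ∀ i, i ≤ ℓ →
      (-1:ℂ)^ℓ / (s 1)^(ℓ+1) * ((-1:ℂ)^(ℓ-i) * s (ℓ-i+2) * (s 1)^(ℓ-i))
        = (-1:ℂ)^i * s (ℓ-i+2) / (s 1)^(i+1) := by
    intro i hi
    have hm1 : (-1:ℂ)^ℓ = (-1:ℂ)^(ℓ-i) * (-1:ℂ)^i := by
      rw [← pow_add]; congr 1; omega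
    have hs1pow : (s 1)^(ℓ+1) = (s 1)^(ℓ-i) * (s 1)^(i+1) := by
      rw [← pow_add]; congr 1; omega
    have hsq : (-1:ℂ)^(ℓ-i) * (-1:ℂ)^(ℓ-i) = 1 := by
      rw [← pow_add, ← two_mul, pow_mul]; norm_num
    have hdiv : (s 1)^(ℓ-i) / ((s 1)^(ℓ-i) * (s 1)^(i+1)) = 1 / (s 1)^(i+1) := by
      rw [div_mul_eq_div_div, div_self (pow_ne_zero _ hs)]
    calc (-1:ℂ)^ℓ / (s 1)^(ℓ+1) * ((-1:ℂ)^(ℓ-i) * s (ℓ-i+2) * (s 1)^(ℓ-i))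
        = ((-1:ℂ)^(ℓ-i) * (-1:ℂ)^(ℓ-i) * ((-1:ℂ)^i * s (ℓ-i+2))) *
            ((s 1)^(ℓ-i) / ((s 1)^(ℓ-i) * (s 1)^(i+1))) := by
          rw [hm1, hs1pow]; ring
      _ = (-1:ℂ)^i * s (ℓ-i+2) / (s 1)^(i+1) := by
          rw [hsq, hdiv, one_mul, mul_one_div]
  rw [HFunAux.pad s (le_refl (ℓ+1)), ← HFunAux.key s ℓ, Finset.mul_sum]
  refine Finset.sum_congr rfl (fun i hi => ?_)
  rw [Finset.mem_range] at hi
  have hile : i ≤ ℓ := by omega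
  rw [HFunAux.pad s (show i ≤ ℓ + 1 by omega), ← Finset.mul_sum, ← mul_assoc, hcoef i hile]
end

section
/- Let $j \geq 1$ and let $c > 0$ be a real number (playing the role of $nx$). Define $S_3(z) = (-1)^{j+1} j! + \sum_{m=0}^{j} \binom{j}{m} (-1)^j m! \log^{j-m}(c)\, c^{1-z} (z-1)^{j-m}$. Then for every $1 \leq i \leq j$, the $i$-th derivative of $S_3$ at $z = 1$ vanishes, i.e., $S_3$ has a zero of order at least $j+1$ at $z=1$. -/
open Finset

/-- The auxiliary entire function `S₃(z)` with `c` playing the role of `n x`. -/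
noncomputable def S3 (j : ℕ) (c : ℝ) (z : ℂ) : ℂ :=
  (-1 : ℂ) ^ (j + 1) * (Nat.factorial j : ℂ) +
    ∑ m ∈ Finset.range (j + 1),
      (j.choose m : ℂ) * (-1 : ℂ) ^ j * (Nat.factorial m : ℂ) *
        (Real.log c : ℂ) ^ (j - m) * (c : ℂ) ^ (1 - z) * (z - 1) ^ (j - m)

lemma expL_hasDerivAt (L z : ℂ) :
    HasDerivAt (fun z : ℂ => Complex.exp (L * (1 - z))) (-L * Complex.exp (L * (1 - z))) z := by
  have h : HasDerivAt (fun z : ℂ => L * (1 - z)) (-L) z := by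
    have := ((hasDerivAt_const z (1 : ℂ)).sub (hasDerivAt_id z)).const_mul L
    simpa using this
  simpa [mul_comm] using h.cexp

/-- Key structural lemma: iterated derivatives of `exp(L(1-z)) (z-1)^n Q(z)` keep the
factor `(z-1)^(n-k)`. -/
lemma aux_iteratedDeriv (L : ℂ) : ∀ k n : ℕ, k ≤ n → ∀ Q : Polynomial ℂ,
    ∃ R : Polynomial ℂ,
      iteratedDeriv k (fun z => Complex.exp (L * (1 - z)) * ((z - 1) ^ n * Q.eval z))
        = fun z => Complex.exp (L * (1 - z)) * ((z - 1) ^ (n - k) * R.eval z) := by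
  intro k
  induction k with
  | zero => intro n _ Q; exact ⟨Q, by simp⟩
  | succ k ih =>
    intro n hk Q
    obtain ⟨R, hR⟩ := ih n (Nat.le_of_succ_le hk) Q
    refine ⟨Polynomial.C (-L) * (Polynomial.X - 1) * R
      + Polynomial.C ((n - k : ℕ) : ℂ) * R + (Polynomial.X - 1) * R.derivative, ?_⟩
    rw [iteratedDeriv_succ, hR]
    funext z
    have h2 : HasDerivAt (fun z : ℂ => (z - 1) ^ (n - k) * R.eval z)
        (((n - k : ℕ) : ℂ) * (z - 1) ^ (n - k - 1) * R.eval z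
          + (z - 1) ^ (n - k) * R.derivative.eval z) z := by
      have hp : HasDerivAt (fun z : ℂ => (z - 1) ^ (n - k))
          (((n - k : ℕ) : ℂ) * (z - 1) ^ (n - k - 1)) z := by
        simpa using ((hasDerivAt_id z).sub_const 1).fun_pow (n - k)
      exact hp.mul (Polynomial.hasDerivAt R z)
    have hd := ((expL_hasDerivAt L z).fun_mul h2).deriv
    rw [hd]
    have hnk : 1 ≤ n - k := by omega
    have hpow : (z - 1) ^ (n - k) = (z - 1) ^ (n - (k + 1)) * (z - 1) := by
      rw [← pow_succ]
      congr 1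
      omega
    have hexp : n - k - 1 = n - (k + 1) := by omega
    rw [hpow, hexp]
    simp only [Polynomial.eval_add, Polynomial.eval_mul, Polynomial.eval_C,
      Polynomial.eval_sub, Polynomial.eval_X, Polynomial.eval_one]
    ring

lemma S3_eq (j : ℕ) (c : ℝ) (hc : 0 < c) :
    S3 j c = fun z => (-1 : ℂ) ^ (j + 1) * (Nat.factorial j : ℂ) +
      ∑ m ∈ Finset.range (j + 1),
        (j.choose m : ℂ) * (-1 : ℂ) ^ j * (Nat.factorial m : ℂ) *
          (Real.log c : ℂ) ^ (j - m) *
          Complex.exp ((Real.log c : ℂ) * (1 - z)) * (z - 1) ^ (j - m) := by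
  funext z
  have hcz : (c : ℂ) ≠ 0 := by exact_mod_cast hc.ne'
  have : (c : ℂ) ^ (1 - z) = Complex.exp ((Real.log c : ℂ) * (1 - z)) := by
    rw [Complex.cpow_def_of_ne_zero hcz, Complex.ofReal_log hc.le]
  simp only [S3, this]

lemma deriv_S3 (j : ℕ) (c : ℝ) (hc : 0 < c) :
    deriv (S3 j c) = fun z =>
      Complex.exp ((Real.log c : ℂ) * (1 - z)) *
        ((z - 1) ^ j * ((-1 : ℂ) ^ (j + 1) * (Real.log c : ℂ) ^ (j + 1))) := by
  set L : ℂ := (Real.log c : ℂ) with hL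
  funext z
  rw [S3_eq j c hc]
  set a : ℕ → ℂ := fun m => (j.choose m : ℂ) * (-1 : ℂ) ^ j * (Nat.factorial m : ℂ) * L ^ (j - m)
    with ha
  have hterm : ∀ m ∈ Finset.range (j + 1),
      HasDerivAt (fun z : ℂ => a m * Complex.exp (L * (1 - z)) * (z - 1) ^ (j - m))
        (a m * (-L * Complex.exp (L * (1 - z))) * (z - 1) ^ (j - m)
          + a m * Complex.exp (L * (1 - z)) * (((j - m : ℕ) : ℂ) * (z - 1) ^ (j - m - 1))) z := by
    intro m _
    have hp : HasDerivAt (fun z : ℂ => (z - 1) ^ (j - m))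
        (((j - m : ℕ) : ℂ) * (z - 1) ^ (j - m - 1)) z := by
      simpa using ((hasDerivAt_id z).sub_const 1).fun_pow (j - m)
    have := (((expL_hasDerivAt L z).const_mul (a m)).fun_mul hp)
    convert this using 1
  have hsum := HasDerivAt.fun_sum hterm
  have hS : HasDerivAt (fun z => (-1 : ℂ) ^ (j + 1) * (Nat.factorial j : ℂ) +
      ∑ m ∈ Finset.range (j + 1), a m * Complex.exp (L * (1 - z)) * (z - 1) ^ (j - m))
      (∑ m ∈ Finset.range (j + 1),
        (a m * (-L * Complex.exp (L * (1 - z))) * (z - 1) ^ (j - m)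
          + a m * Complex.exp (L * (1 - z)) * (((j - m : ℕ) : ℂ) * (z - 1) ^ (j - m - 1)))) z := by
    simpa using (hasDerivAt_const z ((-1 : ℂ) ^ (j + 1) * (Nat.factorial j : ℂ))).fun_add hsum
  have hderiv := hS.deriv
  -- the functions match
  have hfun : (fun z => (-1 : ℂ) ^ (j + 1) * (Nat.factorial j : ℂ) +
      ∑ m ∈ Finset.range (j + 1), a m * Complex.exp (L * (1 - z)) * (z - 1) ^ (j - m))
      = fun z => (-1 : ℂ) ^ (j + 1) * (Nat.factorial j : ℂ) +
      ∑ m ∈ Finset.range (j + 1),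
        (j.choose m : ℂ) * (-1 : ℂ) ^ j * (Nat.factorial m : ℂ) * L ^ (j - m) *
          Complex.exp (L * (1 - z)) * (z - 1) ^ (j - m) := by
    funext w; simp [ha]
  rw [← hfun, hderiv]
  -- telescoping
  set u : ℕ → ℂ := fun m => a m * (-L * Complex.exp (L * (1 - z))) * (z - 1) ^ (j - m) with hu
  have htel : ∀ m ∈ Finset.range (j + 1),
      (a m * (-L * Complex.exp (L * (1 - z))) * (z - 1) ^ (j - m)
        + a m * Complex.exp (L * (1 - z)) * (((j - m : ℕ) : ℂ) * (z - 1) ^ (j - m - 1)))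
      = u m - u (m + 1) := by
    intro m hm
    rw [Finset.mem_range] at hm
    have key : a m * ((j - m : ℕ) : ℂ) = a (m + 1) * L := by
      rcases Nat.lt_or_ge m j with h | h
      · have hch : (j.choose (m + 1)) * (m + 1) = j.choose m * (j - m) :=
          Nat.choose_succ_right_eq j m
        have hL' : L ^ (j - m) = L * L ^ (j - (m + 1)) := by
          rw [← pow_succ']; congr 1; omega
        have hfac : ((Nat.factorial (m + 1) : ℕ) : ℂ)
            = ((m : ℂ) + 1) * (Nat.factorial m : ℂ) := by
          rw [Nat.factorial_succ]; push_cast; ring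
        have hchC : ((j.choose (m + 1) : ℕ) : ℂ) * ((m : ℂ) + 1)
            = ((j.choose m : ℕ) : ℂ) * ((j - m : ℕ) : ℂ) := by
          exact_mod_cast congrArg (Nat.cast : ℕ → ℂ) hch
        simp only [ha, hL', hfac]
        linear_combination (-((-1 : ℂ) ^ j * (Nat.factorial m : ℂ) * L)
          * L ^ (j - (m + 1))) * hchC
      · have hm' : m = j := by omega
        subst hm'
        simp [ha, Nat.choose_succ_self]
    have huu : u (m + 1) = -(a m * Complex.exp (L * (1 - z)) * (((j - m : ℕ) : ℂ) * (z - 1) ^ (j - m - 1))) := by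
      have hsub : j - (m + 1) = j - m - 1 := by omega
      simp only [hu, hsub]
      linear_combination (Complex.exp (L * (1 - z)) * (z - 1) ^ (j - m - 1)) * key
    rw [huu]; ring
  rw [Finset.sum_congr rfl htel, Finset.sum_range_sub']
  have hu0 : u 0 = a 0 * (-L * Complex.exp (L * (1 - z))) * (z - 1) ^ j := by simp [hu]
  have huj : u (j + 1) = 0 := by simp [hu, ha, Nat.choose_succ_self]
  rw [hu0, huj, ha]
  simp only [Nat.choose_zero_right, Nat.factorial_zero, Nat.sub_zero, Nat.cast_one]
  ring

theorem S3_iteratedDeriv_vanish (j : ℕ) (hj : 1 ≤ j) (c : ℝ) (hc : 0 < c) :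
    ∀ i : ℕ, 1 ≤ i → i ≤ j → iteratedDeriv i (S3 j c) 1 = 0 := by
  intro i hi hij
  obtain ⟨k, rfl⟩ : ∃ k, i = k + 1 := ⟨i - 1, by omega⟩
  rw [iteratedDeriv_succ', deriv_S3 j c hc]
  obtain ⟨R, hR⟩ := aux_iteratedDeriv (Real.log c : ℂ) k j (by omega)
    (Polynomial.C ((-1 : ℂ) ^ (j + 1) * (Real.log c : ℂ) ^ (j + 1)))
  simp only [Polynomial.eval_C] at hR
  rw [hR]
  have hjk : j - k ≠ 0 := by omega
  simp [sub_self, zero_pow hjk]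
end

section
/- Let $j \geq 1$ and $c > 0$. With $S_3(z) = (-1)^{j+1} j! + \sum_{m=0}^{j} \binom{j}{m} (-1)^j m! \log^{j-m}(c)\, c^{1-z} (z-1)^{j-m}$, one has $\lim_{z \to 1} \frac{S_3(z)}{(z-1)^{j+1}} = \frac{(-1)^{j+1} j! \log^{j+1}(c)}{(j+1)!}$. -/
open Finset Filter

-- Tail of exp divided by u^(j+1) tends to 0
lemma tail_tendsto (j : ℕ) :
    Tendsto (fun u : ℂ => (Complex.exp u - ∑ k ∈ range (j + 2), u ^ k / k.factorial) / u ^ (j + 1))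
      (nhds 0) (nhds 0) := by
  set C : ℝ := ((j + 2).succ : ℝ) * (((j + 2).factorial : ℝ) * ((j + 2 : ℕ) : ℝ))⁻¹ with hC
  have hb : ∀ u : ℂ, ‖u‖ ≤ 1 →
      ‖(Complex.exp u - ∑ k ∈ range (j + 2), u ^ k / k.factorial) / u ^ (j + 1)‖
        ≤ ‖u‖ * C := by
    intro u hu
    rcases eq_or_ne u 0 with rfl | hu0
    · simp
    · rw [norm_div,
        div_le_iff₀ (norm_pos_iff.mpr (pow_ne_zero _ hu0))]
      refine le_trans (Complex.exp_bound hu (n := j + 2) (by omega)) (le_of_eq ?_)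
      rw [norm_pow, hC]
      push_cast
      ring
  have h1 : Tendsto (fun u : ℂ => ‖u‖ * C) (nhds 0) (nhds 0) := by
    have := ((continuous_norm (E := ℂ)).tendsto 0).mul_const C
    simpa using this
  apply squeeze_zero_norm' _ h1
  filter_upwards [Metric.ball_mem_nhds (0 : ℂ) one_pos] with u hu
  exact hb u (by simpa using (mem_ball_zero_iff.mp hu).le)

theorem S3_limit (j : ℕ) (hj : 1 ≤ j) (c : ℝ) (hc : 0 < c) :
    Tendsto (fun z : ℂ => S3 j c z / (z - 1) ^ (j + 1)) (nhdsWithin 1 {(1 : ℂ)}ᶜ)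
      (nhds ((-1 : ℂ) ^ (j + 1) * (Nat.factorial j : ℂ) * (Real.log c : ℂ) ^ (j + 1)
        / (Nat.factorial (j + 1) : ℂ))) := by
  set L : ℂ := (Real.log c : ℂ) with hL
  have hc0 : (c : ℂ) ≠ 0 := by exact_mod_cast hc.ne'
  have hpow : ∀ z : ℂ, (c : ℂ) ^ (1 - z) = Complex.exp (-((z - 1) * L)) := by
    intro z
    rw [Complex.cpow_def_of_ne_zero hc0, ← Complex.ofReal_log hc.le]
    ring_nf
    rw [hL]; ring_nf
  have hS3 : ∀ z : ℂ, S3 j c z =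
      (-1 : ℂ) ^ (j + 1) * (Nat.factorial j : ℂ) *
        (1 - Complex.exp (-((z - 1) * L)) *
          ∑ k ∈ range (j + 1), ((z - 1) * L) ^ k / k.factorial) := by
    intro z
    unfold S3
    rw [show (∑ m ∈ range (j + 1),
        (j.choose m : ℂ) * (-1 : ℂ) ^ j * (Nat.factorial m : ℂ) *
          L ^ (j - m) * (c : ℂ) ^ (1 - z) * (z - 1) ^ (j - m))
      = (-1 : ℂ) ^ j * Complex.exp (-((z - 1) * L)) *
          ∑ m ∈ range (j + 1), ((j.choose m : ℂ) * (Nat.factorial m : ℂ)) * ((z - 1) * L) ^ (j - m) from ?_]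
    · rw [show (∑ m ∈ range (j + 1),
          ((j.choose m : ℂ) * (Nat.factorial m : ℂ)) * ((z - 1) * L) ^ (j - m))
        = (Nat.factorial j : ℂ) * ∑ k ∈ range (j + 1), ((z - 1) * L) ^ k / k.factorial from ?_]
      · ring
      · rw [Finset.mul_sum, ← Finset.sum_range_reflect]
        refine Finset.sum_congr rfl fun m hm => ?_
        simp only [Finset.mem_range] at hm
        have hmj : m ≤ j := by omega
        have h1 : j + 1 - 1 - m = j - m := by omega
        rw [h1, Nat.sub_sub_self hmj]
        have h2 : j.choose (j - m) * (j - m).factorial * m.factorial = j.factorial := by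
          rw [show j.choose (j - m) = j.choose m from by rw [← Nat.choose_symm hmj]]
          have := Nat.choose_mul_factorial_mul_factorial hmj
          rw [← this]; ring
        have h3 : (j.choose (j - m) : ℂ) * ((j - m).factorial : ℂ)
            = (j.factorial : ℂ) / (m.factorial : ℂ) := by
          rw [eq_div_iff (by exact_mod_cast m.factorial_ne_zero)]
          exact_mod_cast congrArg (Nat.cast (R := ℂ)) h2
        rw [h3]; ring
    · simp only [Finset.mul_sum]
      refine Finset.sum_congr rfl fun m hm => ?_
      rw [hpow z, mul_pow]
      ring
  set g : ℂ → ℂ := fun u => (-1 : ℂ) ^ (j + 1) * (Nat.factorial j : ℂ) * Complex.exp (-u) *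
      (L ^ (j + 1) / ((j + 1).factorial : ℂ) +
        L ^ (j + 1) * ((Complex.exp u - ∑ k ∈ range (j + 2), u ^ k / k.factorial) / u ^ (j + 1)))
    with hg
  have hgt : Tendsto g (nhds 0) (nhds ((-1 : ℂ) ^ (j + 1) * (Nat.factorial j : ℂ) * L ^ (j + 1)
      / ((j + 1).factorial : ℂ))) := by
    have h1 : Tendsto (fun u : ℂ => Complex.exp (-u)) (nhds 0) (nhds 1) := by
      have := (Complex.continuous_exp.comp continuous_neg).tendsto 0
      simpa [Function.comp_def] using this
    have h2 := tail_tendsto j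
    have := (tendsto_const_nhds (x := (-1 : ℂ) ^ (j + 1) * (Nat.factorial j : ℂ))).mul
      (h1.mul ((tendsto_const_nhds (x := L ^ (j + 1) / ((j + 1).factorial : ℂ))).add
        ((tendsto_const_nhds (x := L ^ (j+1))).mul h2)))
    simp only [mul_zero, add_zero, mul_one] at this
    convert this using 2 with u
    · rw [hg]; ring
    · ring
  have hcomp : Tendsto (fun z : ℂ => g ((z - 1) * L)) (nhdsWithin 1 {(1 : ℂ)}ᶜ)
      (nhds ((-1 : ℂ) ^ (j + 1) * (Nat.factorial j : ℂ) * L ^ (j + 1)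
      / ((j + 1).factorial : ℂ))) := by
    apply hgt.comp
    apply tendsto_nhdsWithin_of_tendsto_nhds
    have : Tendsto (fun z : ℂ => (z - 1) * L) (nhds 1) (nhds ((1 - 1) * L)) :=
      ((continuous_id.sub continuous_const).mul continuous_const).tendsto 1
    simpa using this
  refine hcomp.congr' ?_
  filter_upwards [self_mem_nhdsWithin] with z hz
  simp only [Set.mem_compl_iff, Set.mem_singleton_iff] at hz
  have hw : z - 1 ≠ 0 := sub_ne_zero.mpr hz
  simp only [hS3 z, hg]
  rcases eq_or_ne L 0 with hL0 | hL0
  · simp only [hL0, mul_zero, zero_pow (Nat.succ_ne_zero j), zero_div, zero_mul, add_zero]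
    have : (∑ k ∈ range (j + 1), (0 : ℂ) ^ k / k.factorial) = 1 := by
      rw [Finset.sum_eq_single 0] <;> simp +contextual [zero_pow]
    simp [this, Complex.exp_zero]
  · have halg : ∀ (n : ℕ) (A F E S w : ℂ), F ≠ 0 → w ≠ 0 → E ≠ 0 →
        A * E⁻¹ * (L ^ (n+1) / F + L ^ (n+1) * ((E - (S + (w*L) ^ (n+1) / F)) / (w*L) ^ (n+1)))
          = A * (1 - E⁻¹ * S) / w ^ (n+1) := by
      intro n A F E S w hF hw hE
      have h0 : (w*L)^(n+1) ≠ 0 := pow_ne_zero _ (mul_ne_zero hw hL0)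
      have h1 : w^(n+1) ≠ 0 := pow_ne_zero _ hw
      field_simp
      ring
    rw [Complex.exp_neg, Finset.sum_range_succ]
    exact halg j _ _ _ _ _ (by exact_mod_cast (j + 1).factorial_ne_zero) hw
      (Complex.exp_ne_zero _)
end

section
/- For positive integers $m, n, z$ with $z > 1$, and any $x$ in the cut plane $|\arg x| < \pi$, the Hurwitz zeta function satisfies $n^z \sum_{j=1}^{m} \zeta\left(z,\, nx + \frac{n(j-1)}{m}\right) = m^z \sum_{j=1}^{n} \zeta\left(z,\, mx + \frac{m(j-1)}{n}\right)$. -/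
open Finset

/-- The Hurwitz zeta function `ζ(z, a) = ∑_{k ≥ 0} (k + a)^{-z}` at a positive integer
first argument `z`. -/
noncomputable def Hzeta (z : ℕ) (a : ℂ) : ℂ := ∑' k : ℕ, 1 / ((k : ℂ) + a) ^ z

lemma hzeta_summable (z : ℕ) (hz : 1 < z) (a : ℂ) :
    Summable (fun k : ℕ => 1 / ((k : ℂ) + a) ^ z) := by
  have hg : Summable (fun k : ℕ => 1 / |(k : ℝ) + a.re| ^ (z : ℝ)) :=
    (Real.summable_one_div_nat_add_rpow a.re z).mpr (by exact_mod_cast hz)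
  refine Summable.of_norm_bounded_eventually hg ?_
  rw [Nat.cofinite_eq_atTop]
  filter_upwards [Filter.eventually_atTop.mpr ⟨⌈|a.re|⌉₊ + 1, fun k hk => hk⟩] with k hk
  have h1 : (0:ℝ) < (k:ℝ) + a.re := by
    have : |a.re| < (k:ℝ) := by
      calc |a.re| ≤ ⌈|a.re|⌉₊ := Nat.le_ceil _
      _ < k := by exact_mod_cast hk
    linarith [neg_abs_le a.re]
  have h2 : (k:ℝ) + a.re ≤ ‖(k:ℂ) + a‖ := by
    have := Complex.abs_re_le_norm ((k:ℂ) + a)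
    simp only [Complex.add_re, Complex.natCast_re] at this
    exact le_trans (le_abs_self _) this
  rw [norm_div, norm_one, norm_pow, abs_of_pos h1, Real.rpow_natCast]
  exact one_div_le_one_div_of_le (pow_pos h1 z) (pow_le_pow_left₀ h1.le h2 z)

lemma hzeta_mult (z n : ℕ) (hz : 1 < z) (hn : 0 < n) (c : ℂ) :
    (n : ℂ) ^ z * Hzeta z ((n : ℂ) * c) = ∑ i ∈ range n, Hzeta z (c + (i : ℂ) / n) := by
  haveI : NeZero n := ⟨hn.ne'⟩
  have hn' : ((n : ℂ)) ≠ 0 := Nat.cast_ne_zero.mpr hn.ne'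
  unfold Hzeta
  rw [← tsum_mul_left]
  -- reindex ℕ ≃ Fin n × ℕ  via N = q*n+r ↦ (r, q)
  have key : ∀ p : Fin n × ℕ, (n:ℂ)^z * (1 / (((p.2 * n + (p.1:ℕ) : ℕ) : ℂ) + n*c)^z)
      = 1 / (((p.2 : ℕ) : ℂ) + (c + ((p.1:ℕ):ℂ)/n))^z := by
    rintro ⟨r, q⟩
    have harg : (((q * n + (r:ℕ) : ℕ) : ℂ) + n*c) = n * (((q:ℕ):ℂ) + (c + ((r:ℕ):ℂ)/n)) := by
      push_cast; field_simp; ring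
    rw [harg, mul_pow]
    by_cases hD : ((q:ℂ) + (c + ((r:ℕ):ℂ)/n)) = 0
    · simp [hD, zero_pow (by omega : z ≠ 0)]
    · field_simp
  have hsum : Summable (fun p : Fin n × ℕ =>
      (n:ℂ)^z * (1 / (((p.2 * n + (p.1:ℕ) : ℕ) : ℂ) + n*c)^z)) := by
    have h0 := (hzeta_summable z hz ((n:ℂ)*c)).mul_left ((n:ℂ)^z)
    have := ((Nat.divModEquiv n).symm.summable_iff (f := fun k : ℕ =>
      (n:ℂ)^z * (1 / ((k : ℂ) + n*c)^z))).mpr h0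
    exact ((Equiv.prodComm (Fin n) ℕ).summable_iff.mpr this).congr (by
      rintro ⟨r, q⟩; rfl)
  calc (∑' N : ℕ, (n:ℂ)^z * (1 / ((N : ℂ) + n*c)^z))
      = ∑' p : ℕ × Fin n, (n:ℂ)^z * (1 / ((((Nat.divModEquiv n).symm p : ℕ) : ℂ) + n*c)^z) :=
        ((Nat.divModEquiv n).symm.tsum_eq _).symm
    _ = ∑' p : Fin n × ℕ, (n:ℂ)^z * (1 / (((p.2 * n + (p.1:ℕ) : ℕ) : ℂ) + n*c)^z) := by
        rw [← (Equiv.prodComm (Fin n) ℕ).tsum_eq]; rfl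
    _ = ∑' p : Fin n × ℕ, 1 / (((p.2 : ℕ) : ℂ) + (c + ((p.1:ℕ):ℂ)/n))^z := by
        exact tsum_congr key
    _ = ∑ r : Fin n, ∑' q : ℕ, 1 / ((q : ℂ) + (c + ((r:ℕ):ℂ)/n))^z := by
        rw [Summable.tsum_prod ((hsum.congr key))]
        exact tsum_fintype _
    _ = ∑ i ∈ range n, ∑' q : ℕ, 1 / ((q : ℂ) + (c + (i : ℂ)/n))^z := by
        rw [Fin.sum_univ_eq_sum_range (fun i => ∑' q : ℕ, 1 / ((q : ℂ) + (c + (i : ℂ)/n))^z)]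

theorem carlitz_hurwitz (m n z : ℕ) (hm : 0 < m) (hn : 0 < n) (hz : 1 < z) (x : ℂ)
    (hx : |x.arg| < Real.pi) :
    (n : ℂ) ^ z * ∑ j ∈ Finset.range m, Hzeta z ((n : ℂ) * x + (n : ℂ) * (j : ℂ) / (m : ℂ))
      = (m : ℂ) ^ z * ∑ j ∈ Finset.range n, Hzeta z ((m : ℂ) * x + (m : ℂ) * (j : ℂ) / (n : ℂ)) := by
  have key : ∀ (a b : ℕ), 0 < a →
      (a:ℂ)^z * ∑ j ∈ Finset.range b, Hzeta z ((a:ℂ)*x + (a:ℂ)*(j:ℂ)/(b:ℂ))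
        = ∑ j ∈ Finset.range b, ∑ i ∈ Finset.range a, Hzeta z (x + (j:ℂ)/b + (i:ℂ)/a) := by
    intro a b ha
    rw [Finset.mul_sum]
    refine Finset.sum_congr rfl fun j hj => ?_
    have h1 : (a:ℂ)*x + (a:ℂ)*(j:ℂ)/(b:ℂ) = (a:ℂ) * (x + (j:ℂ)/b) := by ring
    rw [h1, hzeta_mult z a hz ha]
  rw [key n m hn, key m n hm, Finset.sum_comm]
  exact Finset.sum_congr rfl fun i _ => Finset.sum_congr rfl fun j _ => by rw [add_right_comm]
end

section
/- For $x > 0$ one has $\left(1 - \tfrac{1}{2}\log 2\right)\psi'(2x) + \psi_1'(2x) = \tfrac{1}{4}\left\{\left(1 + \tfrac{1}{2}\log 2\right)\left(\psi'(x) + \psi'\left(x + \tfrac{1}{2}\right)\right) + \psi_1'(x) + \psi_1'\left(x + \tfrac{1}{2}\right)\right\}$. -/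
open Finset Filter

/-- The generalized digamma function `ψ_k(x) = -γ_k(x)`, minus the generalized
Stieltjes constant. -/
noncomputable def psiGen (k : ℕ) (x : ℝ) : ℝ :=
  - limUnder Filter.atTop (fun n : ℕ =>
      (∑ j ∈ Finset.range (n + 1), (Real.log (j + x)) ^ k / (j + x))
        - (Real.log (n + x)) ^ (k + 1) / (k + 1))

open Set
open scoped Topology

noncomputable def phiF (k : ℕ) (u : ℝ) : ℝ := (Real.log u) ^ k / u
noncomputable def PhiF (k : ℕ) (u : ℝ) : ℝ := (Real.log u) ^ (k + 1) / (k + 1)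
noncomputable def psiSeq (k : ℕ) (x : ℝ) (n : ℕ) : ℝ :=
  (∑ j ∈ Finset.range (n + 1), (Real.log (j + x)) ^ k / (j + x))
    - (Real.log (n + x)) ^ (k + 1) / (k + 1)

lemma hasDerivAt_PhiF (k : ℕ) {u : ℝ} (hu : 0 < u) : HasDerivAt (PhiF k) (phiF k u) u := by
  have h := ((Real.hasDerivAt_log hu.ne').pow (k + 1)).div_const ((k : ℝ) + 1)
  refine (h : HasDerivAt (PhiF k) _ u).congr_deriv ?_
  have : ((k:ℝ) + 1) ≠ 0 := by positivity
  simp only [phiF, Nat.add_sub_cancel, Nat.cast_add, Nat.cast_one]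
  field_simp

lemma hasDerivAt_phiF (k : ℕ) {u : ℝ} (hu : 0 < u) :
    HasDerivAt (phiF k) ((k * (Real.log u) ^ (k - 1) - (Real.log u) ^ k) / u ^ 2) u := by
  have h := ((Real.hasDerivAt_log hu.ne').pow k).div (hasDerivAt_id u) hu.ne'
  refine (h : HasDerivAt (phiF k) _ u).congr_deriv ?_
  simp only [id, Pi.pow_apply]
  field_simp

lemma phiF_nonneg (k : ℕ) {u : ℝ} (hu : 1 ≤ u) : 0 ≤ phiF k u := by
  have h1 : (0:ℝ) < u := lt_of_lt_of_le one_pos hu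
  have h2 : 0 ≤ Real.log u := Real.log_nonneg hu
  exact div_nonneg (pow_nonneg h2 k) h1.le

lemma one_le_expk (k : ℕ) : (1:ℝ) ≤ Real.exp k := Real.one_le_exp (by positivity)

lemma phiF_antitoneOn (k : ℕ) : AntitoneOn (phiF k) (Set.Ici (Real.exp k)) := by
  have hM : (1:ℝ) ≤ Real.exp k := one_le_expk k
  have hd : ∀ u ∈ Set.Ici (Real.exp k), 0 < u := fun u hu =>
    lt_of_lt_of_le (lt_of_lt_of_le one_pos hM) hu
  apply antitoneOn_of_deriv_nonpos (convex_Ici _)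
  · exact fun u hu => ((hasDerivAt_phiF k (hd u hu)).continuousAt).continuousWithinAt
  · intro u hu
    rw [interior_Ici, Set.mem_Ioi] at hu
    exact ((hasDerivAt_phiF k (hd u (Set.mem_Ici.mpr (le_of_lt hu)))).differentiableAt).differentiableWithinAt
  · intro u hu
    rw [interior_Ici, Set.mem_Ioi] at hu
    have hu0 : 0 < u := hd u (Set.mem_Ici.mpr (le_of_lt hu))
    rw [(hasDerivAt_phiF k hu0).deriv]
    have hlog : (k : ℝ) ≤ Real.log u := by
      rw [Real.le_log_iff_exp_le hu0]
      exact hu.le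
    have hnum : (k : ℝ) * (Real.log u) ^ (k - 1) - (Real.log u) ^ k ≤ 0 := by
      rcases Nat.eq_zero_or_pos k with hk | hk
      · subst hk; simp
      · have hl0 : (0:ℝ) ≤ Real.log u := le_trans (by positivity) hlog
        have h1 : (k : ℝ) * (Real.log u) ^ (k - 1) ≤ Real.log u * (Real.log u) ^ (k - 1) :=
          mul_le_mul_of_nonneg_right hlog (pow_nonneg hl0 _)
        have h2 : Real.log u * (Real.log u) ^ (k - 1) = (Real.log u) ^ k := by
          rw [← pow_succ']
          congr 1
          omega
        linarith
    exact div_nonpos_of_nonpos_of_nonneg hnum (sq_nonneg u)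

lemma tendsto_phiF_atTop (k : ℕ) : Tendsto (phiF k) atTop (𝓝 0) := by
  have := Real.tendsto_pow_log_div_mul_add_atTop 1 0 k one_ne_zero
  simp at this; exact this

lemma tendsto_phiF_comp (k : ℕ) (y : ℝ) :
    Tendsto (fun n : ℕ => phiF k ((n:ℝ) + y)) atTop (𝓝 0) :=
  (tendsto_phiF_atTop k).comp (tendsto_atTop_add_const_right atTop y tendsto_natCast_atTop_atTop)

lemma PhiF_sub_eq (k : ℕ) {a b : ℝ} (ha : 0 < a) (hab : a < b) :
    ∃ c ∈ Set.Ioo a b, PhiF k b - PhiF k a = phiF k c * (b - a) := by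
  obtain ⟨c, hc, hc2⟩ := exists_hasDerivAt_eq_slope (PhiF k) (phiF k) hab
    (fun u hu => ((hasDerivAt_PhiF k (lt_of_lt_of_le ha hu.1)).continuousAt).continuousWithinAt)
    (fun u hu => hasDerivAt_PhiF k (lt_trans ha hu.1))
  refine ⟨c, hc, ?_⟩
  rw [hc2, div_mul_cancel₀ _ (sub_ne_zero.mpr hab.ne')]

lemma psiSeq_identity (k : ℕ) (x : ℝ) (n : ℕ) :
    psiSeq k x n = (phiF k x - PhiF k x)
      + ∑ j ∈ Finset.range n,
          (phiF k ((j:ℝ) + 1 + x) - (PhiF k ((j:ℝ) + 1 + x) - PhiF k ((j:ℝ) + x))) := by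
  induction n with
  | zero => simp [psiSeq, phiF, PhiF]
  | succ n ih =>
      rw [Finset.sum_range_succ, ← add_assoc, ← ih]
      unfold psiSeq phiF PhiF
      rw [Finset.sum_range_succ]
      push_cast
      ring

lemma psiSeq_tendsto (k : ℕ) {x : ℝ} (hx : 0 < x) :
    ∃ L, Tendsto (psiSeq k x) atTop (𝓝 L) := by
  set c : ℕ → ℝ := fun j =>
    phiF k ((j:ℝ) + 1 + x) - (PhiF k ((j:ℝ) + 1 + x) - PhiF k ((j:ℝ) + x)) with hcdef
  set N : ℕ := ⌈Real.exp k⌉₊ with hNdef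
  have hNk : Real.exp k ≤ (N:ℝ) := Nat.le_ceil _
  set f : ℕ → ℝ := fun j => phiF k ((j:ℝ) + ((N:ℝ) + x)) with hfdef
  have hargpos : ∀ j : ℕ, Real.exp k ≤ (j:ℝ) + ((N:ℝ) + x) := by
    intro j
    have : (0:ℝ) ≤ (j:ℝ) := Nat.cast_nonneg j
    linarith
  have hargpos' : ∀ j : ℕ, (0:ℝ) < (j:ℝ) + ((N:ℝ) + x) := fun j =>
    lt_of_lt_of_le (Real.exp_pos _) (hargpos j)
  have hmemIci : ∀ j : ℕ, (j:ℝ) + ((N:ℝ) + x) ∈ Set.Ici (Real.exp k) := fun j => hargpos j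
  -- d is nonneg
  have hf_anti : ∀ j : ℕ, f (j+1) ≤ f j := by
    intro j
    exact phiF_antitoneOn k (hmemIci j) (hmemIci (j+1)) (by push_cast; linarith)
  have hf_nonneg : ∀ j : ℕ, 0 ≤ f j :=
    fun j => phiF_nonneg k (le_trans (one_le_expk k) (hargpos j))
  have hd_sum : ∀ n : ℕ, ∑ j ∈ Finset.range n, (f j - f (j+1)) ≤ f 0 := by
    intro n
    rw [Finset.sum_range_sub' f n]
    linarith [hf_nonneg n]
  have hd_summable : Summable (fun j => f j - f (j+1)) :=
    summable_of_sum_range_le (fun j => by linarith [hf_anti j]) hd_sum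
  have hbound : ∀ j : ℕ, ‖c (j + N)‖ ≤ f j - f (j+1) := by
    intro j
    have hcast : ((j + N : ℕ):ℝ) = (j:ℝ) + N := by push_cast; ring
    have ha : (0:ℝ) < (j:ℝ) + ((N:ℝ) + x) := hargpos' j
    have hab : (j:ℝ) + ((N:ℝ) + x) < (j:ℝ) + 1 + ((N:ℝ) + x) := by linarith
    obtain ⟨u, hu, hueq⟩ := PhiF_sub_eq k ha hab
    have hu1 : phiF k ((j:ℝ) + 1 + ((N:ℝ) + x)) ≤ phiF k u := by
      apply phiF_antitoneOn k (le_trans (hargpos j) hu.1.le) ?_ hu.2.le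
      push_cast; exact le_trans (hargpos j) (by linarith)
    have hu2 : phiF k u ≤ phiF k ((j:ℝ) + ((N:ℝ) + x)) :=
      phiF_antitoneOn k (hmemIci j) (le_trans (hargpos j) hu.1.le) hu.1.le
    have harg1 : ((j+N:ℕ):ℝ) + 1 + x = (j:ℝ) + 1 + ((N:ℝ) + x) := by push_cast; ring
    have harg2 : ((j+N:ℕ):ℝ) + x = (j:ℝ) + ((N:ℝ) + x) := by push_cast; ring
    have hceq : c (j + N) = phiF k ((j:ℝ) + 1 + ((N:ℝ) + x)) - phiF k u := by
      show phiF k (((j+N:ℕ):ℝ) + 1 + x)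
          - (PhiF k (((j+N:ℕ):ℝ) + 1 + x) - PhiF k (((j+N:ℕ):ℝ) + x)) = _
      rw [harg1, harg2, hueq]; ring
    rw [hceq, Real.norm_eq_abs]
    have hf1 : f (j+1) = phiF k ((j:ℝ) + 1 + ((N:ℝ) + x)) := by
      show phiF k (((j+1:ℕ):ℝ) + ((N:ℝ) + x)) = _
      congr 1
      push_cast; ring
    have hf0 : f j = phiF k ((j:ℝ) + ((N:ℝ) + x)) := rfl
    rw [abs_le]
    constructor
    · rw [hf0, hf1]; linarith
    · rw [hf0, hf1]; linarith
  have hcsum : Summable c := by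
    rw [← summable_nat_add_iff N]
    exact Summable.of_norm_bounded hd_summable hbound
  refine ⟨(phiF k x - PhiF k x) + ∑' j, c j, ?_⟩
  have this : Tendsto (fun n : ℕ => (phiF k x - PhiF k x) + ∑ j ∈ Finset.range n, c j)
      atTop (𝓝 ((phiF k x - PhiF k x) + ∑' j, c j)) :=
    tendsto_const_nhds.add hcsum.hasSum.tendsto_sum_nat
  have h2 : ∀ n, (phiF k x - PhiF k x) + ∑ j ∈ Finset.range n, c j = psiSeq k x n := by
    intro n
    rw [hcdef]
    exact (psiSeq_identity k x n).symm
  exact this.congr h2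

lemma psiGen_tendsto (k : ℕ) {x : ℝ} (hx : 0 < x) :
    Tendsto (fun n => -psiSeq k x n) atTop (𝓝 (psiGen k x)) := by
  obtain ⟨L, hL⟩ := psiSeq_tendsto k hx
  have h1 : Tendsto (fun n : ℕ =>
      (∑ j ∈ Finset.range (n + 1), (Real.log (j + x)) ^ k / (j + x))
        - (Real.log (n + x)) ^ (k + 1) / (k + 1)) atTop (𝓝 L) := hL
  have h2 : psiGen k x = -L := by rw [psiGen, h1.limUnder_eq]
  rw [h2]; exact hL.neg

lemma tendsto_PhiF_sub (k : ℕ) {y z : ℝ} (hy : 0 < y) (hyz : y < z) :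
    Tendsto (fun n : ℕ => PhiF k ((n:ℝ) + z) - PhiF k ((n:ℝ) + y)) atTop (𝓝 0) := by
  have hg : Tendsto (fun n : ℕ => (z - y) * phiF k ((n:ℝ) + y)) atTop (𝓝 0) := by
    simpa using (tendsto_phiF_comp k y).const_mul (z - y)
  refine squeeze_zero_norm' ?_ hg
  · filter_upwards [eventually_ge_atTop ⌈Real.exp k⌉₊] with n hn
    have hn' : Real.exp k ≤ (n:ℝ) := le_trans (Nat.le_ceil _) (Nat.cast_le.mpr hn)
    have h0 : (0:ℝ) < (n:ℝ) + y := lt_of_lt_of_le (Real.exp_pos _) (by linarith)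
    obtain ⟨u, hu, hueq⟩ := PhiF_sub_eq k h0 (show (n:ℝ) + y < (n:ℝ) + z by linarith)
    have hmem : (n:ℝ) + y ∈ Set.Ici (Real.exp k) := by
      simp only [Set.mem_Ici]; linarith
    have humem : u ∈ Set.Ici (Real.exp k) := by
      simp only [Set.mem_Ici]; linarith [hu.1]
    have h1 : phiF k u ≤ phiF k ((n:ℝ) + y) := phiF_antitoneOn k hmem humem hu.1.le
    have h2 : 0 ≤ phiF k u := phiF_nonneg k (le_trans (one_le_expk k) humem)
    have h3 : (n:ℝ) + z - ((n:ℝ) + y) = z - y := by ring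
    rw [hueq, h3, Real.norm_eq_abs, abs_mul, abs_of_nonneg h2,
      abs_of_nonneg (by linarith : (0:ℝ) ≤ z - y)]
    nlinarith

lemma psiGen_differentiableAt (k : ℕ) {a b : ℝ} (ha : 0 < a) {u : ℕ → ℝ} (hu : Summable u)
    (hbound : ∀ (j : ℕ), ∀ y ∈ Set.Ioo a b,
      ‖((k:ℝ) * (Real.log ((j:ℝ) + y)) ^ (k - 1) - (Real.log ((j:ℝ) + y)) ^ k) / ((j:ℝ) + y) ^ 2‖
        ≤ u j)
    {p : ℝ} (hp : p ∈ Set.Ioo a b) : DifferentiableAt ℝ (psiGen k) p := by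
  set D : ℕ → ℝ → ℝ := fun j y =>
    ((k:ℝ) * (Real.log ((j:ℝ) + y)) ^ (k - 1) - (Real.log ((j:ℝ) + y)) ^ k) / ((j:ℝ) + y) ^ 2
    with hD
  -- derivative of each partial function
  have hderiv : ∀ n : ℕ, ∀ y ∈ Set.Ioo a b,
      HasDerivAt (fun y => -psiSeq k y n)
        (-((∑ j ∈ Finset.range (n+1), D j y) - phiF k ((n:ℝ) + y))) y := by
    intro n y hy
    have hy0 : 0 < y := lt_trans ha hy.1
    have hterm : ∀ j : ℕ, HasDerivAt (fun y => phiF k ((j:ℝ) + y)) (D j y) y := by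
      intro j
      have hjy : (0:ℝ) < (j:ℝ) + y := by positivity
      have h := (hasDerivAt_phiF k hjy).comp y ((hasDerivAt_id y).const_add (j:ℝ))
      simp at h; exact h
    have hsum : HasDerivAt (fun y => ∑ j ∈ Finset.range (n+1), phiF k ((j:ℝ) + y))
        (∑ j ∈ Finset.range (n+1), D j y) y :=
      HasDerivAt.fun_sum (fun j _ => hterm j)
    have htail : HasDerivAt (fun y => PhiF k ((n:ℝ) + y)) (phiF k ((n:ℝ) + y)) y := by
      have hny : (0:ℝ) < (n:ℝ) + y := by positivity
      have h := (hasDerivAt_PhiF k hny).comp y ((hasDerivAt_id y).const_add (n:ℝ))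
      simp at h; exact h
    exact (hsum.sub htail).neg
  -- uniform convergence of derivatives
  have hA : TendstoUniformlyOn (fun (n:ℕ) (y:ℝ) => ∑ j ∈ Finset.range n, D j y)
      (fun y => ∑' j, D j y) atTop (Set.Ioo a b) :=
    tendstoUniformlyOn_tsum_nat hu (fun j y hy => hbound j y hy)
  have hA' : TendstoUniformlyOn (fun (n:ℕ) (y:ℝ) => ∑ j ∈ Finset.range (n+1), D j y)
      (fun y => ∑' j, D j y) atTop (Set.Ioo a b) := by
    rw [Metric.tendstoUniformlyOn_iff] at hA ⊢
    intro ε hε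
    exact (tendsto_add_atTop_nat 1).eventually (hA ε hε)
  have hB : TendstoUniformlyOn (fun (n:ℕ) (y:ℝ) => phiF k ((n:ℝ) + y)) (fun _ => (0:ℝ))
      atTop (Set.Ioo a b) := by
    rw [Metric.tendstoUniformlyOn_iff]
    intro ε hε
    have h1 : ∀ᶠ n : ℕ in atTop, phiF k ((n:ℝ) + a) < ε :=
      (tendsto_phiF_comp k a).eventually_lt_const hε
    have h2 : ∀ᶠ n : ℕ in atTop, ⌈Real.exp k⌉₊ ≤ n := eventually_ge_atTop _
    refine (h1.and h2).mono ?_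
    rintro n ⟨h1n, h2n⟩ y hy
    have hn' : Real.exp k ≤ (n:ℝ) := le_trans (Nat.le_ceil _) (Nat.cast_le.mpr h2n)
    have hya : a < y := hy.1
    have hmem1 : (n:ℝ) + a ∈ Set.Ici (Real.exp k) := by
      simp only [Set.mem_Ici]; linarith
    have hmem2 : (n:ℝ) + y ∈ Set.Ici (Real.exp k) := by
      simp only [Set.mem_Ici]; linarith
    have hle : phiF k ((n:ℝ) + y) ≤ phiF k ((n:ℝ) + a) :=
      phiF_antitoneOn k hmem1 hmem2 (by linarith)
    have hge : 0 ≤ phiF k ((n:ℝ) + y) := phiF_nonneg k (le_trans (one_le_expk k) hmem2)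
    rw [Real.dist_eq]
    rw [abs_of_nonpos (by linarith)]
    linarith
  have hC : TendstoUniformlyOn
      (fun (n:ℕ) (y:ℝ) => -((∑ j ∈ Finset.range (n+1), D j y) - phiF k ((n:ℝ) + y)))
      (fun y => phiF k 0 - phiF k 0 + (0 - ∑' j, D j y)) atTop (Set.Ioo a b) := by
    have h := hB.sub hA'
    have h2 : TendstoUniformlyOn
        (fun (n:ℕ) (y:ℝ) => -((∑ j ∈ Finset.range (n+1), D j y) - phiF k ((n:ℝ) + y)))
        ((fun _ => (0:ℝ)) - fun y => ∑' j, D j y) atTop (Set.Ioo a b) := by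
      apply h.congr
      apply Filter.Eventually.of_forall
      intro n y hy
      simp only [Pi.sub_apply]
      ring
    apply h2.congr_right
    intro y hy
    simp only [Pi.sub_apply]
    ring
  have hpt : ∀ y ∈ Set.Ioo a b,
      Tendsto (fun n => -psiSeq k y n) atTop (𝓝 (psiGen k y)) :=
    fun y hy => psiGen_tendsto k (lt_trans ha hy.1)
  have := hasDerivAt_of_tendstoUniformlyOn isOpen_Ioo hC
    (Filter.Eventually.of_forall hderiv) hpt hp
  exact this.differentiableAt

lemma summable_one_div_sq_add {a : ℝ} (ha : 0 < a) :
    Summable (fun j : ℕ => 1 / ((j:ℝ) + a) ^ 2) := by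
  have hbase : Summable (fun j : ℕ => 1 / ((j:ℝ) + 1) ^ 2) := by
    have h := (_root_.summable_nat_add_iff 1).mpr
      (Real.summable_one_div_nat_pow.mpr (le_refl 2))
    exact h.congr (fun n => by push_cast; norm_num)
  have hm : 0 < min a 1 := lt_min ha one_pos
  apply Summable.of_nonneg_of_le (fun j => by positivity) ?_ (hbase.mul_left (1/(min a 1)^2))
  intro j
  have hj : (0:ℝ) ≤ (j:ℝ) := Nat.cast_nonneg j
  have hle : min a 1 * ((j:ℝ) + 1) ≤ (j:ℝ) + a := by
    have h1 : min a 1 ≤ a := min_le_left _ _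
    have h2 : min a 1 ≤ 1 := min_le_right _ _
    nlinarith
  have hpos : 0 < min a 1 * ((j:ℝ) + 1) := by positivity
  have hsq : (min a 1 * ((j:ℝ) + 1)) ^ 2 ≤ ((j:ℝ) + a) ^ 2 := by nlinarith
  calc 1 / ((j:ℝ) + a) ^ 2 ≤ 1 / (min a 1 * ((j:ℝ) + 1)) ^ 2 :=
        one_div_le_one_div_of_le (by positivity) hsq
    _ = 1 / (min a 1) ^ 2 * (1 / ((j:ℝ) + 1) ^ 2) := by
        rw [mul_pow]
        simp [mul_inv, mul_comm]
  
lemma summable_sqrt_div {a b : ℝ} (ha : 0 < a) (hb : 0 < b) :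
    Summable (fun j : ℕ => Real.sqrt ((j:ℝ) + b) / ((j:ℝ) + a) ^ 2) := by
  have hbase : Summable (fun j : ℕ => ((j:ℝ) + 1) ^ (-(3/2) : ℝ)) := by
    have h0 : Summable (fun n : ℕ => (n:ℝ) ^ (-(3/2) : ℝ)) :=
      Real.summable_nat_rpow.mpr (by norm_num)
    have h := (_root_.summable_nat_add_iff 1).mpr h0
    exact h.congr (fun n => by push_cast; norm_num)
  have hm : 0 < min a 1 := lt_min ha one_pos
  set C : ℝ := Real.sqrt (b + 1) / (min a 1) ^ 2 with hC
  apply Summable.of_nonneg_of_le (fun j => by positivity) ?_ (hbase.mul_left C)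
  intro j
  have hj : (0:ℝ) ≤ (j:ℝ) := Nat.cast_nonneg j
  have ht : (0:ℝ) < (j:ℝ) + 1 := by linarith
  have hs1 : Real.sqrt ((j:ℝ) + b) ≤ Real.sqrt ((j:ℝ) + 1) * Real.sqrt (b + 1) := by
    rw [← Real.sqrt_mul (by linarith)]
    apply Real.sqrt_le_sqrt
    nlinarith
  have hle : min a 1 * ((j:ℝ) + 1) ≤ (j:ℝ) + a := by
    have h1 : min a 1 ≤ a := min_le_left _ _
    have h2 : min a 1 ≤ 1 := min_le_right _ _
    nlinarith
  have hsq : (min a 1) ^ 2 * ((j:ℝ) + 1) ^ 2 ≤ ((j:ℝ) + a) ^ 2 := by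
    have hh := mul_self_le_mul_self (by positivity : (0:ℝ) ≤ (min a 1) * ((j:ℝ)+1)) hle
    nlinarith [hh]
  have hkey : Real.sqrt ((j:ℝ) + 1) / ((j:ℝ) + 1) ^ 2 = ((j:ℝ) + 1) ^ (-(3/2) : ℝ) := by
    rw [show ((j:ℝ) + 1) ^ 2 = ((j:ℝ) + 1) ^ ((2:ℕ):ℝ) from (Real.rpow_natCast _ 2).symm,
      Real.sqrt_eq_rpow, ← Real.rpow_sub ht]
    norm_num
  calc Real.sqrt ((j:ℝ) + b) / ((j:ℝ) + a) ^ 2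
      ≤ Real.sqrt ((j:ℝ) + 1) * Real.sqrt (b + 1) / ((min a 1) ^ 2 * ((j:ℝ) + 1) ^ 2) := by
        apply div_le_div₀ (by positivity) hs1 (by positivity) hsq
    _ = C * (Real.sqrt ((j:ℝ) + 1) / ((j:ℝ) + 1) ^ 2) := by
        rw [hC]; field_simp
    _ = C * ((j:ℝ) + 1) ^ (-(3/2) : ℝ) := by rw [hkey]

lemma log_le_two_sqrt {t : ℝ} (ht : 0 < t) : Real.log t ≤ 2 * Real.sqrt t := by
  have hs : 0 < Real.sqrt t := Real.sqrt_pos.mpr ht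
  have h1 : Real.log t = 2 * Real.log (Real.sqrt t) := by
    rw [show (2:ℝ) = ((2:ℕ):ℝ) by norm_num, ← Real.log_pow, Real.sq_sqrt ht.le]
  rw [h1]
  have := Real.log_le_sub_one_of_pos hs
  linarith

lemma psiGen_diff0 {p : ℝ} (hp : 0 < p) : DifferentiableAt ℝ (psiGen 0) p := by
  have ha : (0:ℝ) < p/2 := half_pos hp
  apply psiGen_differentiableAt 0 ha (summable_one_div_sq_add ha)
    (b := p + 1) ?_ (p := p) ⟨half_lt_self hp, by linarith⟩
  intro j y hy
  have hy0 : 0 < y := lt_trans ha hy.1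
  have hjy : (0:ℝ) < (j:ℝ) + y := by positivity
  have hnum : ((0:ℕ):ℝ) * Real.log ((j:ℝ) + y) ^ ((0:ℕ) - 1)
      - Real.log ((j:ℝ) + y) ^ (0:ℕ) = -1 := by norm_num
  rw [hnum, norm_div, norm_neg, norm_one, Real.norm_eq_abs,
    abs_of_nonneg (by positivity : (0:ℝ) ≤ ((j:ℝ)+y)^2)]
  apply one_div_le_one_div_of_le (by positivity)
  have : (j:ℝ) + p/2 ≤ (j:ℝ) + y := by linarith [hy.1]
  nlinarith [(Nat.cast_nonneg j : (0:ℝ) ≤ (j:ℝ))]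

lemma psiGen_diff1 {p : ℝ} (hp : 0 < p) : DifferentiableAt ℝ (psiGen 1) p := by
  have ha : (0:ℝ) < p/2 := half_pos hp
  have hb : (0:ℝ) < p + 1 := by linarith
  have hsum : Summable (fun j : ℕ =>
      (1 + |Real.log (p/2)|) * (1 / ((j:ℝ) + p/2) ^ 2)
        + 2 * (Real.sqrt ((j:ℝ) + (p+1)) / ((j:ℝ) + p/2) ^ 2)) :=
    ((summable_one_div_sq_add ha).mul_left _).add ((summable_sqrt_div ha hb).mul_left 2)
  apply psiGen_differentiableAt 1 ha hsum
    (b := p + 1) ?_ (p := p) ⟨half_lt_self hp, by linarith⟩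
  intro j y hy
  have hy0 : 0 < y := lt_trans ha hy.1
  have hjy : (0:ℝ) < (j:ℝ) + y := by positivity
  have hjb : (j:ℝ) + y < (j:ℝ) + (p+1) := by linarith [hy.2]
  have hjb0 : (0:ℝ) < (j:ℝ) + (p+1) := by positivity
  -- |log (j+y)| ≤ |log (p/2)| + 2 √(j+(p+1))
  have hlog : |Real.log ((j:ℝ) + y)| ≤ |Real.log (p/2)| + 2 * Real.sqrt ((j:ℝ) + (p+1)) := by
    rcases le_or_gt 1 ((j:ℝ) + y) with h1 | h1
    · rw [abs_of_nonneg (Real.log_nonneg h1)]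
      have h2 : Real.log ((j:ℝ) + y) ≤ Real.log ((j:ℝ) + (p+1)) :=
        Real.log_le_log hjy hjb.le
      have h3 := log_le_two_sqrt hjb0
      have h4 : (0:ℝ) ≤ |Real.log (p/2)| := abs_nonneg _
      linarith
    · have ha1 : p/2 < 1 := by
        have : p/2 < (j:ℝ) + y := lt_of_lt_of_le hy.1 (by linarith [(Nat.cast_nonneg j : (0:ℝ) ≤ (j:ℝ))])
        linarith
      have h2 : Real.log (p/2) ≤ Real.log ((j:ℝ) + y) :=
        Real.log_le_log ha (le_trans hy.1.le (by linarith [(Nat.cast_nonneg j : (0:ℝ) ≤ (j:ℝ))]))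
      have h3 : Real.log ((j:ℝ) + y) < 0 := Real.log_neg hjy h1
      have h5 : 0 ≤ Real.sqrt ((j:ℝ) + (p+1)) := Real.sqrt_nonneg _
      rw [abs_of_neg h3, abs_of_neg (lt_of_le_of_lt h2 h3)]
      linarith
  -- the numerator with k = 1
  have hnum : ((1:ℕ):ℝ) * Real.log ((j:ℝ) + y) ^ ((1:ℕ) - 1)
      - Real.log ((j:ℝ) + y) ^ (1:ℕ) = 1 - Real.log ((j:ℝ) + y) := by norm_num
  rw [hnum, norm_div, Real.norm_eq_abs, Real.norm_eq_abs,
    abs_of_nonneg (by positivity : (0:ℝ) ≤ ((j:ℝ)+y)^2)]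
  have hup : |1 - Real.log ((j:ℝ) + y)| ≤ 1 + |Real.log (p/2)| + 2 * Real.sqrt ((j:ℝ) + (p+1)) := by
    have := abs_sub (1:ℝ) (Real.log ((j:ℝ) + y))
    have h0 : |(1:ℝ)| = 1 := abs_one
    calc |1 - Real.log ((j:ℝ) + y)| ≤ |(1:ℝ)| + |Real.log ((j:ℝ) + y)| := abs_sub _ _
      _ ≤ 1 + (|Real.log (p/2)| + 2 * Real.sqrt ((j:ℝ) + (p+1))) := by rw [h0]; linarith
      _ = 1 + |Real.log (p/2)| + 2 * Real.sqrt ((j:ℝ) + (p+1)) := by ring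
  have hden : ((j:ℝ) + p/2) ^ 2 ≤ ((j:ℝ) + y) ^ 2 := by
    have : (j:ℝ) + p/2 ≤ (j:ℝ) + y := by linarith [hy.1]
    nlinarith [(Nat.cast_nonneg j : (0:ℝ) ≤ (j:ℝ))]
  have hden0 : (0:ℝ) < ((j:ℝ) + p/2) ^ 2 := by positivity
  calc |1 - Real.log ((j:ℝ) + y)| / ((j:ℝ) + y) ^ 2
      ≤ (1 + |Real.log (p/2)| + 2 * Real.sqrt ((j:ℝ) + (p+1))) / ((j:ℝ) + p/2) ^ 2 :=
        div_le_div₀ (by positivity) hup hden0 hden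
    _ = (1 + |Real.log (p/2)|) * (1 / ((j:ℝ) + p/2) ^ 2)
        + 2 * (Real.sqrt ((j:ℝ) + (p+1)) / ((j:ℝ) + p/2) ^ 2) := by ring

lemma psiGen_eq_neg_lim (k : ℕ) {x L : ℝ} (hL : Tendsto (psiSeq k x) atTop (𝓝 L)) :
    psiGen k x = -L := by
  have h1 : Tendsto (fun n : ℕ =>
      (∑ j ∈ Finset.range (n + 1), (Real.log (j + x)) ^ k / (j + x))
        - (Real.log (n + x)) ^ (k + 1) / (k + 1)) atTop (𝓝 L) := hL
  rw [psiGen, h1.limUnder_eq]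

lemma sum_range_even_odd (g : ℕ → ℝ) (n : ℕ) :
    ∑ j ∈ Finset.range (2*(n+1)), g j
      = ∑ m ∈ Finset.range (n+1), (g (2*m) + g (2*m+1)) := by
  induction n with
  | zero => simp [Finset.sum_range_succ]
  | succ n ih =>
      have h2 : 2*(n+1+1) = 2*(n+1)+1+1 := by ring
      rw [h2, Finset.sum_range_succ, Finset.sum_range_succ, ih]
      conv_rhs => rw [Finset.sum_range_succ]
      ring

lemma htwo : Tendsto (fun n : ℕ => 2*n+1) atTop atTop := by
  apply tendsto_atTop_mono (f := id) (fun n => ?_) tendsto_id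
  simp
  omega

lemma tendsto_log_sub (k : ℕ) {y z : ℝ} (hy : 0 < y) (hyz : y < z) :
    Tendsto (fun n : ℕ => Real.log ((n:ℝ) + y) - Real.log ((n:ℝ) + z)) atTop (𝓝 0) := by
  have h := (tendsto_PhiF_sub 0 hy hyz).neg
  rw [neg_zero] at h
  apply h.congr
  intro n
  simp [PhiF]

lemma id0 {x : ℝ} (hx : 0 < x) (n : ℕ) :
    psiSeq 0 (2*x) (2*n+1) = (1/2)*(psiSeq 0 x n + psiSeq 0 (x+1/2) n)
      + ((1/2)*(Real.log ((n:ℝ)+x) - Real.log ((n:ℝ)+(x+1/2))) - Real.log 2) := by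
  have hxn : ∀ m : ℕ, (0:ℝ) < (m:ℝ) + x := fun m => by positivity
  have hxn' : ∀ m : ℕ, (0:ℝ) < (m:ℝ) + (x+1/2) := fun m => by
    have := (Nat.cast_nonneg m : (0:ℝ) ≤ m); linarith
  simp only [psiSeq, pow_zero, pow_one, Nat.cast_zero, zero_add, Nat.cast_ofNat]
  have hrange : 2*n+1+1 = 2*(n+1) := by ring
  rw [hrange, sum_range_even_odd (fun j => 1/((j:ℝ) + 2*x)) n]
  have hterm : ∀ m ∈ Finset.range (n+1),
      1/(((2*m:ℕ):ℝ) + 2*x) + 1/(((2*m+1:ℕ):ℝ) + 2*x)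
        = (1/2)*(1/((m:ℝ)+x)) + (1/2)*(1/((m:ℝ)+(x+1/2))) := by
    intro m _
    have h1 : ((2*m:ℕ):ℝ) + 2*x = 2*((m:ℝ)+x) := by push_cast; ring
    have h2 : ((2*m+1:ℕ):ℝ) + 2*x = 2*((m:ℝ)+(x+1/2)) := by push_cast; ring
    rw [h1, h2]
    have := hxn m
    have := hxn' m
    field_simp
  rw [Finset.sum_congr rfl hterm, Finset.sum_add_distrib, ← Finset.mul_sum, ← Finset.mul_sum]
  have htail : Real.log (((2*n+1:ℕ):ℝ) + 2*x) = Real.log 2 + Real.log ((n:ℝ)+(x+1/2)) := by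
    have h3 : ((2*n+1:ℕ):ℝ) + 2*x = 2*((n:ℝ)+(x+1/2)) := by push_cast; ring
    rw [h3, Real.log_mul two_ne_zero (hxn' n).ne']
  rw [htail]
  push_cast
  ring

lemma psiGen0_dup {x : ℝ} (hx : 0 < x) :
    psiGen 0 (2*x) = (1/2)*(psiGen 0 x + psiGen 0 (x+1/2)) + Real.log 2 := by
  obtain ⟨L, hL⟩ := psiSeq_tendsto 0 hx
  obtain ⟨L', hL'⟩ := psiSeq_tendsto 0 (show (0:ℝ) < x+1/2 by linarith)
  obtain ⟨M, hM⟩ := psiSeq_tendsto 0 (show (0:ℝ) < 2*x by linarith)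
  have hsub : Tendsto (fun n : ℕ => psiSeq 0 (2*x) (2*n+1)) atTop (𝓝 M) := hM.comp htwo
  have hrhs : Tendsto (fun n : ℕ => (1/2)*(psiSeq 0 x n + psiSeq 0 (x+1/2) n)
      + ((1/2)*(Real.log ((n:ℝ)+x) - Real.log ((n:ℝ)+(x+1/2))) - Real.log 2))
      atTop (𝓝 ((1/2)*(L+L') + ((1/2)*0 - Real.log 2))) :=
    ((hL.add hL').const_mul _).add
      (((tendsto_log_sub 0 hx (by linarith)).const_mul _).sub tendsto_const_nhds)
  have key : M = (1/2)*(L+L') + ((1/2)*0 - Real.log 2) :=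
    tendsto_nhds_unique hsub (hrhs.congr (fun n => (id0 hx n).symm))
  rw [psiGen_eq_neg_lim 0 hM, psiGen_eq_neg_lim 0 hL, psiGen_eq_neg_lim 0 hL']
  rw [key]; ring

lemma tendsto_logsq_sub {y z : ℝ} (hy : 0 < y) (hyz : y < z) :
    Tendsto (fun n : ℕ => Real.log ((n:ℝ)+y)^2 - Real.log ((n:ℝ)+z)^2) atTop (𝓝 0) := by
  have h := (tendsto_PhiF_sub 1 hy hyz).neg
  rw [neg_zero] at h
  have h2 := h.const_mul (2:ℝ)
  rw [mul_zero] at h2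
  apply h2.congr
  intro n
  simp [PhiF]
  ring

lemma id1 {x : ℝ} (hx : 0 < x) (n : ℕ) :
    psiSeq 1 (2*x) (2*n+1)
      = (Real.log 2/2)*(psiSeq 0 x n + psiSeq 0 (x+1/2) n)
        + (1/2)*(psiSeq 1 x n + psiSeq 1 (x+1/2) n)
        + ((Real.log 2/2)*(Real.log ((n:ℝ)+x) - Real.log ((n:ℝ)+(x+1/2)))
            + (1/4)*(Real.log ((n:ℝ)+x)^2 - Real.log ((n:ℝ)+(x+1/2))^2)
            - (Real.log 2)^2/2) := by
  have hxn : ∀ m : ℕ, (0:ℝ) < (m:ℝ) + x := fun m => by positivity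
  have hxn' : ∀ m : ℕ, (0:ℝ) < (m:ℝ) + (x+1/2) := fun m => by
    have := (Nat.cast_nonneg m : (0:ℝ) ≤ m); linarith
  simp only [psiSeq, pow_one, pow_zero, Nat.cast_zero, Nat.cast_one, zero_add]
  have hrange : 2*n+1+1 = 2*(n+1) := by ring
  rw [hrange, sum_range_even_odd (fun j => Real.log ((j:ℝ) + 2*x)/((j:ℝ) + 2*x)) n]
  have hterm : ∀ m ∈ Finset.range (n+1),
      Real.log (((2*m:ℕ):ℝ) + 2*x)/(((2*m:ℕ):ℝ) + 2*x)
        + Real.log (((2*m+1:ℕ):ℝ) + 2*x)/(((2*m+1:ℕ):ℝ) + 2*x)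
      = (Real.log 2/2)*(1/((m:ℝ)+x)) + (Real.log 2/2)*(1/((m:ℝ)+(x+1/2)))
        + (1/2)*(Real.log ((m:ℝ)+x)/((m:ℝ)+x))
        + (1/2)*(Real.log ((m:ℝ)+(x+1/2))/((m:ℝ)+(x+1/2))) := by
    intro m _
    have h1 : ((2*m:ℕ):ℝ) + 2*x = 2*((m:ℝ)+x) := by push_cast; ring
    have h2 : ((2*m+1:ℕ):ℝ) + 2*x = 2*((m:ℝ)+(x+1/2)) := by push_cast; ring
    rw [h1, h2, Real.log_mul two_ne_zero (hxn m).ne', Real.log_mul two_ne_zero (hxn' m).ne']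
    have := hxn m
    have := hxn' m
    field_simp
    ring
  rw [Finset.sum_congr rfl hterm, Finset.sum_add_distrib, Finset.sum_add_distrib,
    Finset.sum_add_distrib, ← Finset.mul_sum, ← Finset.mul_sum, ← Finset.mul_sum,
    ← Finset.mul_sum]
  have htail : Real.log (((2*n+1:ℕ):ℝ) + 2*x) = Real.log 2 + Real.log ((n:ℝ)+(x+1/2)) := by
    have h3 : ((2*n+1:ℕ):ℝ) + 2*x = 2*((n:ℝ)+(x+1/2)) := by push_cast; ring
    rw [h3, Real.log_mul two_ne_zero (hxn' n).ne']
  rw [htail]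
  ring

lemma psiGen1_dup {x : ℝ} (hx : 0 < x) :
    psiGen 1 (2*x) = (Real.log 2/2)*(psiGen 0 x + psiGen 0 (x+1/2))
      + (1/2)*(psiGen 1 x + psiGen 1 (x+1/2)) + (Real.log 2)^2/2 := by
  have hx' : (0:ℝ) < x+1/2 := by linarith
  obtain ⟨L0, hL0⟩ := psiSeq_tendsto 0 hx
  obtain ⟨L0', hL0'⟩ := psiSeq_tendsto 0 hx'
  obtain ⟨L1, hL1⟩ := psiSeq_tendsto 1 hx
  obtain ⟨L1', hL1'⟩ := psiSeq_tendsto 1 hx'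
  obtain ⟨M1, hM1⟩ := psiSeq_tendsto 1 (show (0:ℝ) < 2*x by linarith)
  have hsub : Tendsto (fun n : ℕ => psiSeq 1 (2*x) (2*n+1)) atTop (𝓝 M1) := hM1.comp htwo
  have hrhs : Tendsto (fun n : ℕ =>
      (Real.log 2/2)*(psiSeq 0 x n + psiSeq 0 (x+1/2) n)
        + (1/2)*(psiSeq 1 x n + psiSeq 1 (x+1/2) n)
        + ((Real.log 2/2)*(Real.log ((n:ℝ)+x) - Real.log ((n:ℝ)+(x+1/2)))
            + (1/4)*(Real.log ((n:ℝ)+x)^2 - Real.log ((n:ℝ)+(x+1/2))^2)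
            - (Real.log 2)^2/2))
      atTop (𝓝 ((Real.log 2/2)*(L0+L0') + (1/2)*(L1+L1')
        + ((Real.log 2/2)*0 + (1/4)*0 - (Real.log 2)^2/2))) :=
    (((hL0.add hL0').const_mul _).add ((hL1.add hL1').const_mul _)).add
      ((((tendsto_log_sub 0 hx (by linarith)).const_mul _).add
        ((tendsto_logsq_sub hx (by linarith)).const_mul _)).sub tendsto_const_nhds)
  have key : M1 = (Real.log 2/2)*(L0+L0') + (1/2)*(L1+L1')
      + ((Real.log 2/2)*0 + (1/4)*0 - (Real.log 2)^2/2) :=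
    tendsto_nhds_unique hsub (hrhs.congr (fun n => (id1 hx n).symm))
  rw [psiGen_eq_neg_lim 1 hM1, psiGen_eq_neg_lim 0 hL0, psiGen_eq_neg_lim 0 hL0',
    psiGen_eq_neg_lim 1 hL1, psiGen_eq_neg_lim 1 hL1', key]
  ring


theorem psi_one_duplication (x : ℝ) (hx : 0 < x) :
    (1 - Real.log 2 / 2) * deriv (psiGen 0) (2 * x) + deriv (psiGen 1) (2 * x)
      = (1 / 4) * ((1 + Real.log 2 / 2) * (deriv (psiGen 0) x + deriv (psiGen 0) (x + 1 / 2))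
          + (deriv (psiGen 1) x + deriv (psiGen 1) (x + 1 / 2))) := by
  have h2x : (0:ℝ) < 2*x := by linarith
  have hx' : (0:ℝ) < x + 1/2 := by linarith
  have d00 := (psiGen_diff0 h2x).hasDerivAt
  have d01 := (psiGen_diff0 hx).hasDerivAt
  have d02 := (psiGen_diff0 hx').hasDerivAt
  have d10 := (psiGen_diff1 h2x).hasDerivAt
  have d11 := (psiGen_diff1 hx).hasDerivAt
  have d12 := (psiGen_diff1 hx').hasDerivAt
  have c2 : HasDerivAt (fun y : ℝ => 2*y) (2*1) x := (hasDerivAt_id x).const_mul (2:ℝ)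
  have hadd : HasDerivAt (fun y : ℝ => y + 1/2) 1 x := (hasDerivAt_id x).add_const (1/2:ℝ)
  have h0L : HasDerivAt (fun y => psiGen 0 (2*y)) (deriv (psiGen 0) (2*x) * (2*1)) x :=
    d00.comp x c2
  have h1L : HasDerivAt (fun y => psiGen 1 (2*y)) (deriv (psiGen 1) (2*x) * (2*1)) x :=
    d10.comp x c2
  have h02 : HasDerivAt (fun y => psiGen 0 (y+1/2)) (deriv (psiGen 0) (x+1/2) * 1) x :=
    (d02.comp x hadd :)
  have h12 : HasDerivAt (fun y => psiGen 1 (y+1/2)) (deriv (psiGen 1) (x+1/2) * 1) x :=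
    (d12.comp x hadd :)
  have h0R : HasDerivAt (fun y => (1/2)*(psiGen 0 y + psiGen 0 (y+1/2)) + Real.log 2)
      ((1/2)*(deriv (psiGen 0) x + deriv (psiGen 0) (x+1/2) * 1)) x :=
    ((d01.add h02).const_mul _).add_const _
  have h1R : HasDerivAt (fun y => (Real.log 2/2)*(psiGen 0 y + psiGen 0 (y+1/2))
        + (1/2)*(psiGen 1 y + psiGen 1 (y+1/2)) + (Real.log 2)^2/2)
      ((Real.log 2/2)*(deriv (psiGen 0) x + deriv (psiGen 0) (x+1/2) * 1)
        + (1/2)*(deriv (psiGen 1) x + deriv (psiGen 1) (x+1/2) * 1)) x :=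
    (((d01.add h02).const_mul _).add ((d11.add h12).const_mul _)).add_const _
  have hev0 : (fun y => psiGen 0 (2*y))
      =ᶠ[nhds x] (fun y => (1/2)*(psiGen 0 y + psiGen 0 (y+1/2)) + Real.log 2) := by
    filter_upwards [Ioi_mem_nhds hx] with y hy
    exact psiGen0_dup hy
  have hev1 : (fun y => psiGen 1 (2*y))
      =ᶠ[nhds x] (fun y => (Real.log 2/2)*(psiGen 0 y + psiGen 0 (y+1/2))
        + (1/2)*(psiGen 1 y + psiGen 1 (y+1/2)) + (Real.log 2)^2/2) := by
    filter_upwards [Ioi_mem_nhds hx] with y hy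
    exact psiGen1_dup hy
  have e0 : deriv (psiGen 0) (2*x) * (2*1)
      = (1/2)*(deriv (psiGen 0) x + deriv (psiGen 0) (x+1/2) * 1) :=
    (h0L.congr_of_eventuallyEq hev0.symm).unique h0R
  have e1 : deriv (psiGen 1) (2*x) * (2*1)
      = (Real.log 2/2)*(deriv (psiGen 0) x + deriv (psiGen 0) (x+1/2) * 1)
        + (1/2)*(deriv (psiGen 1) x + deriv (psiGen 1) (x+1/2) * 1) :=
    (h1L.congr_of_eventuallyEq hev1.symm).unique h1R
  linear_combination ((1 - Real.log 2/2)/2) * e0 + (1/2) * e1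
end

section
/- For $x > 0$ and any non-negative integer $\ell$, as $x \to \infty$ one has $\psi_\ell'(x) = \frac{\log^\ell x}{x} + O_\ell\left(\frac{\log^\ell x}{x^2}\right)$, where $\psi_\ell$ is the $\ell$-th generalized digamma function. -/
open Finset Filter Asymptotics
open Set Topology

noncomputable def gG (k : ℕ) (t : ℝ) : ℝ := Real.log t ^ (k+1) / (k+1)
noncomputable def g0 (k : ℕ) (t : ℝ) : ℝ := Real.log t ^ k / t
lemma log_ge {c t : ℝ} (h : Real.exp c ≤ t) : c ≤ Real.log t :=
  (Real.le_log_iff_exp_le (lt_of_lt_of_le (Real.exp_pos c) h)).2 h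

lemma hasDerivAt_phi (k m : ℕ) {t : ℝ} (ht : 0 < t) :
    HasDerivAt (fun t => Real.log t ^ k / t ^ (m+1))
      (((k:ℝ) * Real.log t ^ (k-1) - ((m:ℝ)+1) * Real.log t ^ k) / t ^ (m+2)) t := by
  have h := ((Real.hasDerivAt_log ht.ne').pow k).div (hasDerivAt_pow (m+1) t)
    (pow_ne_zero (m+1) ht.ne')
  refine h.congr_deriv (Eq.symm ?_)
  have h1 : t ^ (m+1) ≠ 0 := pow_ne_zero _ ht.ne'
  push_cast
  simp only [Pi.pow_apply]
  field_simp
  ring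

lemma anti (k m : ℕ) :
    AntitoneOn (fun t => Real.log t ^ k / t ^ (m+1)) (Ici (Real.exp (2*(k:ℝ)+2))) := by
  have hE : (0:ℝ) < Real.exp (2*(k:ℝ)+2) := Real.exp_pos _
  refine (strictAntiOn_of_deriv_neg (convex_Ici _) ?_ ?_).antitoneOn
  · intro t ht
    exact (hasDerivAt_phi k m (lt_of_lt_of_le hE ht)).continuousAt.continuousWithinAt
  · intro t ht
    rw [interior_Ici] at ht
    have ht0 : 0 < t := lt_trans hE ht
    rw [(hasDerivAt_phi k m ht0).deriv]
    apply div_neg_of_neg_of_pos _ (by positivity)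
    have hL : 2*(k:ℝ)+2 ≤ Real.log t := log_ge ht.le
    rw [sub_neg]
    rcases k with _ | k'
    · simp only [Nat.cast_zero, zero_mul, pow_zero, mul_one]
      positivity
    · have hlt : (0:ℝ) < Real.log t := by linarith [Nat.cast_nonneg (α := ℝ) k']
      have hpos : (0:ℝ) < Real.log t ^ k' := pow_pos hlt k'
      calc ((k'+1 : ℕ):ℝ) * Real.log t ^ ((k'+1)-1)
          = ((k':ℝ)+1) * Real.log t ^ k' := by push_cast; ring
        _ < Real.log t * Real.log t ^ k' := by
            apply mul_lt_mul_of_pos_right _ hpos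
            push_cast at hL ⊢; linarith
        _ = Real.log t ^ (k'+1) := by rw [← pow_succ']
        _ ≤ ((m:ℝ)+1) * Real.log t ^ (k'+1) := by
            apply le_mul_of_one_le_left (by positivity); push_cast; linarith [Nat.cast_nonneg (α := ℝ) m]

-- MVT: difference equals derivative at point times length
lemma mvt_one {F F' : ℝ → ℝ} {a b : ℝ} (hab : a < b)
    (hF : ∀ t ∈ Icc a b, HasDerivAt F (F' t) t) :
    ∃ c ∈ Ioo a b, F b - F a = F' c * (b - a) := by
  obtain ⟨c, hc, h⟩ := exists_hasDerivAt_eq_slope F F' hab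
    (fun t ht => (hF t ht).continuousAt.continuousWithinAt)
    (fun t ht => hF t (Ioo_subset_Icc_self ht))
  refine ⟨c, hc, ?_⟩
  rw [h, div_mul_cancel₀]
  exact sub_ne_zero_of_ne hab.ne'

lemma double_mvt {F F' F'' : ℝ → ℝ} {a : ℝ}
    (hF : ∀ t ∈ Icc a (a+1), HasDerivAt F (F' t) t)
    (hF' : ∀ t ∈ Icc a (a+1), HasDerivAt F' (F'' t) t) :
    ∃ d ∈ Ioo a (a+1), |F' a - (F (a+1) - F a)| ≤ |F'' d| := by
  obtain ⟨c, hc, hc2⟩ := mvt_one (lt_add_one a) hF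
  have hsub : Icc a c ⊆ Icc a (a+1) := Icc_subset_Icc le_rfl hc.2.le
  obtain ⟨d, hd, hd2⟩ := mvt_one hc.1 (fun t ht => hF' t (hsub ht))
  refine ⟨d, ⟨hd.1, lt_trans hd.2 hc.2⟩, ?_⟩
  have hca : 0 < c - a := by linarith [hc.1]
  have hca1 : c - a ≤ 1 := by linarith [hc.2]
  calc |F' a - (F (a+1) - F a)| = |F'' d * (c - a)| := by
        rw [hc2, add_sub_cancel_left, mul_one, ← abs_neg, ← hd2]; ring_nf
    _ = |F'' d| * |c - a| := abs_mul _ _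
    _ ≤ |F'' d| * 1 := by
        apply mul_le_mul_of_nonneg_left _ (abs_nonneg _)
        rw [abs_of_pos hca]; exact hca1
    _ = |F'' d| := mul_one _

lemma tele {b φ : ℕ → ℝ} {K : ℝ} (hb : ∀ j, 0 ≤ b j) (hφ : ∀ j, 0 ≤ φ j) (hK : 0 ≤ K)
    (key : ∀ j, b (j+1) ≤ K * (φ j - φ (j+1))) :
    Summable b ∧ ∑' j, b j ≤ b 0 + K * φ 0 := by
  have hpart : ∀ n, ∑ j ∈ Finset.range n, b j ≤ b 0 + K * φ 0 := by
    intro n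
    cases n with
    | zero => simpa using add_nonneg (hb 0) (mul_nonneg hK (hφ 0))
    | succ n =>
      rw [Finset.sum_range_succ']
      have h1 : ∑ i ∈ Finset.range n, b (i+1) ≤ K * (φ 0 - φ n) := by
        calc ∑ i ∈ Finset.range n, b (i+1)
            ≤ ∑ i ∈ Finset.range n, K * (φ i - φ (i+1)) :=
              Finset.sum_le_sum fun i _ => key i
          _ = K * ∑ i ∈ Finset.range n, (φ i - φ (i+1)) := by rw [Finset.mul_sum]
          _ = K * (φ 0 - φ n) := by rw [Finset.sum_range_sub']
      have h2 : 0 ≤ K * φ n := mul_nonneg hK (hφ n)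
      have h3 : K * (φ 0 - φ n) = K * φ 0 - K * φ n := by ring
      linarith
  exact ⟨summable_of_sum_range_le hb hpart, Real.tsum_le_of_sum_range_le hb hpart⟩


noncomputable def g1 (k : ℕ) (t : ℝ) : ℝ :=
  ((k : ℝ) * Real.log t ^ (k-1) - Real.log t ^ k) / t ^ 2
noncomputable def g2 (k : ℕ) (t : ℝ) : ℝ :=
  ((k : ℝ) * ((k-1 : ℕ) : ℝ) * Real.log t ^ (k-1-1)
    - 3 * (k : ℝ) * Real.log t ^ (k-1) + 2 * Real.log t ^ k) / t ^ 3

lemma kpow_le {k : ℕ} {L : ℝ} (hL : 2*(k:ℝ)+2 ≤ L) : (k:ℝ) * L ^ (k-1) ≤ (1/2) * L ^ k := by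
  rcases k with _ | k'
  · simp only [Nat.cast_zero, zero_mul, pow_zero]
    norm_num
  · have hk0 : (0:ℝ) ≤ (k' : ℝ) := Nat.cast_nonneg _
    have hL0 : (0:ℝ) < L := by push_cast at hL; linarith
    have hpos : (0:ℝ) < L ^ k' := pow_pos hL0 k'
    have h1 : ((k'+1 : ℕ):ℝ) ≤ L/2 := by push_cast at hL ⊢; linarith
    calc ((k'+1 : ℕ):ℝ) * L ^ ((k'+1)-1) = ((k'+1 : ℕ):ℝ) * L ^ k' := rfl
      _ ≤ (L/2) * L ^ k' := mul_le_mul_of_nonneg_right h1 hpos.le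
      _ = (1/2) * L ^ (k'+1) := by rw [pow_succ]; ring

lemma abs_g1 {k : ℕ} {t : ℝ} (ht : Real.exp (2*(k:ℝ)+2) ≤ t) :
    |g1 k t| ≤ 2 * (Real.log t ^ k / t ^ 2) := by
  have ht0 : 0 < t := lt_of_lt_of_le (Real.exp_pos _) ht
  have hL : 2*(k:ℝ)+2 ≤ Real.log t := (Real.le_log_iff_exp_le ht0).2 ht
  have hL0 : (0:ℝ) ≤ Real.log t := by linarith [Nat.cast_nonneg (α := ℝ) k]
  have h1 := kpow_le hL
  have h2 : (0:ℝ) ≤ Real.log t ^ k := by positivity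
  rw [g1, abs_div, abs_of_pos (by positivity : (0:ℝ) < t ^ 2), mul_div_assoc']
  apply div_le_div_of_nonneg_right ?_ (by positivity)
  have h3 : (0:ℝ) ≤ (k:ℝ) * Real.log t ^ (k-1) := by positivity
  calc |(k:ℝ) * Real.log t ^ (k-1) - Real.log t ^ k|
      ≤ |(k:ℝ) * Real.log t ^ (k-1)| + |Real.log t ^ k| := abs_sub _ _
    _ = (k:ℝ) * Real.log t ^ (k-1) + Real.log t ^ k := by
        rw [abs_of_nonneg h3, abs_of_nonneg h2]
    _ ≤ 2 * Real.log t ^ k := by linarith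
  
lemma abs_g2 {k : ℕ} {t : ℝ} (ht : Real.exp (2*(k:ℝ)+2) ≤ t) :
    |g2 k t| ≤ 4 * (Real.log t ^ k / t ^ 3) := by
  have ht0 : 0 < t := lt_of_lt_of_le (Real.exp_pos _) ht
  have hL : 2*(k:ℝ)+2 ≤ Real.log t := (Real.le_log_iff_exp_le ht0).2 ht
  have hL0 : (0:ℝ) ≤ Real.log t := by linarith [Nat.cast_nonneg (α := ℝ) k]
  have hL' : 2*((k-1 : ℕ):ℝ)+2 ≤ Real.log t := by
    have : ((k-1:ℕ):ℝ) ≤ (k:ℝ) := Nat.cast_le.2 (Nat.sub_le k 1)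
    linarith
  have h1 := kpow_le hL
  have h1' := kpow_le hL'
  have h2 : (0:ℝ) ≤ Real.log t ^ k := by positivity
  have h2' : (0:ℝ) ≤ Real.log t ^ (k-1) := by positivity
  have hk0 : (0:ℝ) ≤ (k:ℝ) := Nat.cast_nonneg _
  rw [g2, abs_div, abs_of_pos (by positivity : (0:ℝ) < t ^ 3), mul_div_assoc']
  apply div_le_div_of_nonneg_right ?_ (by positivity)
  have e1 : (k:ℝ) * (((k-1 : ℕ):ℝ) * Real.log t ^ (k-1-1)) ≤ (k:ℝ) * ((1/2) * Real.log t ^ (k-1)) :=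
    mul_le_mul_of_nonneg_left h1' hk0
  have e2 : (k:ℝ) * ((1/2) * Real.log t ^ (k-1)) = (1/2) * ((k:ℝ) * Real.log t ^ (k-1)) := by ring
  have e3 : (0:ℝ) ≤ (k:ℝ) * ((k-1:ℕ):ℝ) * Real.log t ^ (k-1-1) := by positivity
  have e4 : (0:ℝ) ≤ 3 * (k:ℝ) * Real.log t ^ (k-1) := by positivity
  calc |(k:ℝ) * ((k-1:ℕ):ℝ) * Real.log t ^ (k-1-1) - 3 * (k:ℝ) * Real.log t ^ (k-1)
        + 2 * Real.log t ^ k|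
      ≤ |(k:ℝ) * ((k-1:ℕ):ℝ) * Real.log t ^ (k-1-1) - 3 * (k:ℝ) * Real.log t ^ (k-1)|
        + |2 * Real.log t ^ k| := abs_add_le _ _
    _ ≤ (|(k:ℝ) * ((k-1:ℕ):ℝ) * Real.log t ^ (k-1-1)| + |3 * (k:ℝ) * Real.log t ^ (k-1)|)
        + |2 * Real.log t ^ k| := by gcongr; exact abs_sub _ _
    _ = (k:ℝ) * ((k-1:ℕ):ℝ) * Real.log t ^ (k-1-1) + 3 * (k:ℝ) * Real.log t ^ (k-1)
        + 2 * Real.log t ^ k := by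
        rw [abs_of_nonneg e3, abs_of_nonneg e4, abs_of_nonneg (by positivity)]
    _ ≤ 4 * Real.log t ^ k := by
        have := mul_le_mul_of_nonneg_left h1 (by norm_num : (0:ℝ) ≤ 3)
        nlinarith [e1, e2]

lemma hasDerivAt_gG (k : ℕ) {t : ℝ} (ht : 0 < t) : HasDerivAt (gG k) (g0 k t) t := by
  have h := ((Real.hasDerivAt_log ht.ne').pow (k+1)).div_const ((k:ℝ)+1)
  refine h.congr_deriv (Eq.symm ?_)
  rw [show k + 1 - 1 = k from rfl, g0]
  have hk : ((k:ℝ)+1) ≠ 0 := by positivity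
  push_cast
  field_simp

lemma hasDerivAt_g0 (k : ℕ) {t : ℝ} (ht : 0 < t) : HasDerivAt (g0 k) (g1 k t) t := by
  have h := ((Real.hasDerivAt_log ht.ne').pow k).div (hasDerivAt_id t) ht.ne'
  refine h.congr_deriv (Eq.symm ?_)
  rw [g1]
  have h2 : t ^ 2 ≠ 0 := by positivity
  simp only [Pi.pow_apply, id]
  field_simp
  try ring

lemma hasDerivAt_g1 (k : ℕ) {t : ℝ} (ht : 0 < t) : HasDerivAt (g1 k) (g2 k t) t := by
  have hnum : HasDerivAt (fun t : ℝ => (k : ℝ) * Real.log t ^ (k-1) - Real.log t ^ k)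
      ((k:ℝ) * (((k-1 : ℕ):ℝ) * Real.log t ^ (k-1-1) * t⁻¹) - (k:ℝ) * Real.log t ^ (k-1) * t⁻¹) t :=
    (((Real.hasDerivAt_log ht.ne').pow (k-1)).const_mul _).sub ((Real.hasDerivAt_log ht.ne').pow k)
  have hden : HasDerivAt (fun t : ℝ => t ^ 2) (2 * t ^ 1) t := by
    simpa using hasDerivAt_pow 2 t
  have h := hnum.div hden (by positivity)
  refine h.congr_deriv (Eq.symm ?_)
  rw [g2]
  field_simp
  ring

lemma logpow (k m : ℕ) {x : ℝ} (hx : Real.exp (2*(k:ℝ)+2) + 1 ≤ x) :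
    Summable (fun j : ℕ => Real.log (x+j) ^ k / (x+j) ^ (m+2)) ∧
    ∑' j : ℕ, Real.log (x+j) ^ k / (x+j) ^ (m+2)
      ≤ Real.log x ^ k / x ^ (m+2) + 2 * (Real.log x ^ k / x ^ (m+1)) := by
  have hE0 : (0:ℝ) < Real.exp (2*(k:ℝ)+2) := Real.exp_pos _
  have hE1 : (1:ℝ) ≤ Real.exp (2*(k:ℝ)+2) := Real.one_le_exp (by positivity)
  have hx0 : (0:ℝ) < x := by linarith
  have harg : ∀ j : ℕ, Real.exp (2*(k:ℝ)+2) ≤ x + j := fun j => by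
    have : (0:ℝ) ≤ j := Nat.cast_nonneg j
    linarith
  have hargpos : ∀ j : ℕ, 0 < x + (j:ℝ) := fun j => lt_of_lt_of_le hE0 (harg j)
  have hlog : ∀ j : ℕ, 0 ≤ Real.log (x + j) := fun j =>
    Real.log_nonneg (le_trans hE1 (harg j))
  have hb : ∀ j : ℕ, 0 ≤ Real.log (x+j) ^ k / (x+j) ^ (m+2) := fun j => by
    have h1 := hlog j; have h2 := hargpos j; positivity
  have hφ : ∀ j : ℕ, 0 ≤ Real.log (x+j) ^ k / (x+j) ^ (m+1) := fun j => by
    have h1 := hlog j; have h2 := hargpos j; positivity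
  have key : ∀ j : ℕ, Real.log (x+((j+1:ℕ):ℝ)) ^ k / (x+((j+1:ℕ):ℝ)) ^ (m+2)
      ≤ 2 * (Real.log (x+j) ^ k / (x+j) ^ (m+1)
          - Real.log (x+((j+1:ℕ):ℝ)) ^ k / (x+((j+1:ℕ):ℝ)) ^ (m+1)) := by
    intro j
    have haE : Real.exp (2*(k:ℝ)+2) ≤ x + (j:ℝ) := harg j
    have ha0 : 0 < x + (j:ℝ) := hargpos j
    have hcast : x + ((j+1:ℕ):ℝ) = (x + (j:ℝ)) + 1 := by push_cast; ring
    rw [hcast]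
    set a := x + (j:ℝ) with ha
    obtain ⟨c, hc, hc2⟩ := mvt_one (lt_add_one a)
      (fun t ht => hasDerivAt_phi k m (lt_of_lt_of_le ha0 ht.1))
    have hcE : Real.exp (2*(k:ℝ)+2) ≤ c := le_trans haE hc.1.le
    have hc0 : 0 < c := lt_of_lt_of_le hE0 hcE
    have hLc : 2*(k:ℝ)+2 ≤ Real.log c := log_ge hcE
    have hLc0 : 0 ≤ Real.log c := by linarith [Nat.cast_nonneg (α := ℝ) k]
    have h1 := kpow_le hLc
    simp only [add_sub_cancel_left, mul_one] at hc2
    have heq : Real.log a ^ k / a ^ (m+1) - Real.log (a+1) ^ k / (a+1) ^ (m+1)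
        = (((m:ℝ)+1) * Real.log c ^ k - (k:ℝ) * Real.log c ^ (k-1)) / c ^ (m+2) := by
      rw [← neg_sub, hc2, ← neg_div, neg_sub]
    rw [heq]
    have step1 : Real.log (a+1) ^ k / (a+1) ^ (m+2) ≤ Real.log c ^ k / c ^ (m+2) :=
      anti k (m+1) (mem_Ici.2 hcE) (mem_Ici.2 (le_trans hcE hc.2.le)) hc.2.le
    refine le_trans step1 ?_
    rw [mul_div_assoc']
    apply div_le_div_of_nonneg_right ?_ (by positivity)
    nlinarith [pow_nonneg hLc0 k, Nat.cast_nonneg (α := ℝ) m,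
      mul_nonneg (Nat.cast_nonneg (α := ℝ) m) (pow_nonneg hLc0 k)]
  have res := tele hb hφ (by norm_num : (0:ℝ) ≤ 2) key
  constructor
  · exact res.1
  · refine le_trans res.2 ?_
    simp only [Nat.cast_zero, add_zero]
    exact le_rfl

noncomputable def hh (k j : ℕ) (y : ℝ) : ℝ :=
  g0 k (j + y) - (gG k (j + 1 + y) - gG k (j + y))
noncomputable def hh1 (k j : ℕ) (y : ℝ) : ℝ :=
  g1 k (j + y) - (g0 k (j + 1 + y) - g0 k (j + y))

lemma hasDerivAt_shift {f : ℝ → ℝ} {f' c x : ℝ} (hf : HasDerivAt f f' (c + x)) :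
    HasDerivAt (fun y => f (c + y)) f' x := by
  exact (hf.comp x ((hasDerivAt_id x).const_add c)).congr_deriv (mul_one _)

lemma hasDerivAt_hh (k j : ℕ) {y : ℝ} (hy : 0 < y) : HasDerivAt (hh k j) (hh1 k j y) y := by
  have h0 : (0:ℝ) < (j:ℝ) + y := by have := Nat.cast_nonneg (α := ℝ) j; linarith
  have h1 : (0:ℝ) < (j:ℝ) + 1 + y := by linarith
  have d1 : HasDerivAt (fun y : ℝ => g0 k ((j:ℝ) + y)) (g1 k ((j:ℝ) + y)) y :=
    hasDerivAt_shift (hasDerivAt_g0 k h0)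
  have d2 : HasDerivAt (fun y : ℝ => gG k ((j:ℝ) + 1 + y)) (g0 k ((j:ℝ) + 1 + y)) y :=
    hasDerivAt_shift (hasDerivAt_gG k h1)
  have d3 : HasDerivAt (fun y : ℝ => gG k ((j:ℝ) + y)) (g0 k ((j:ℝ) + y)) y :=
    hasDerivAt_shift (hasDerivAt_gG k h0)
  exact d1.sub (d2.sub d3)

lemma abs_hh1_le (k : ℕ) {a : ℝ} (haE : Real.exp (2*(k:ℝ)+2) ≤ a) :
    |g1 k a - (g0 k (a+1) - g0 k a)| ≤ 4 * (Real.log a ^ k / a ^ 3) := by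
  have ha0 : 0 < a := lt_of_lt_of_le (Real.exp_pos _) haE
  obtain ⟨d, hd, hd2⟩ := double_mvt
    (fun t ht => hasDerivAt_g0 k (lt_of_lt_of_le ha0 ht.1))
    (fun t ht => hasDerivAt_g1 k (lt_of_lt_of_le ha0 ht.1))
  have hdE : Real.exp (2*(k:ℝ)+2) ≤ d := le_trans haE hd.1.le
  refine le_trans hd2 (le_trans (abs_g2 hdE) ?_)
  have : Real.log d ^ k / d ^ 3 ≤ Real.log a ^ k / a ^ 3 := by
    have := anti k 2 (mem_Ici.2 haE) (mem_Ici.2 hdE) hd.1.le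
    simpa using this
  linarith

lemma abs_hh_le (k : ℕ) {a : ℝ} (haE : Real.exp (2*(k:ℝ)+2) ≤ a) :
    |g0 k a - (gG k (a+1) - gG k a)| ≤ 2 * (Real.log a ^ k / a ^ 2) := by
  have ha0 : 0 < a := lt_of_lt_of_le (Real.exp_pos _) haE
  obtain ⟨d, hd, hd2⟩ := double_mvt
    (fun t ht => hasDerivAt_gG k (lt_of_lt_of_le ha0 ht.1))
    (fun t ht => hasDerivAt_g0 k (lt_of_lt_of_le ha0 ht.1))
  have hdE : Real.exp (2*(k:ℝ)+2) ≤ d := le_trans haE hd.1.le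
  refine le_trans hd2 (le_trans (abs_g1 hdE) ?_)
  have : Real.log d ^ k / d ^ 2 ≤ Real.log a ^ k / a ^ 2 := by
    have := anti k 1 (mem_Ici.2 haE) (mem_Ici.2 hdE) hd.1.le
    simpa using this
  linarith

lemma abs_hh1 (k j : ℕ) {y : ℝ} (hy : Real.exp (2*(k:ℝ)+2) ≤ y) :
    |hh1 k j y| ≤ 4 * (Real.log ((j:ℝ)+y) ^ k / ((j:ℝ)+y) ^ 3) := by
  have haE : Real.exp (2*(k:ℝ)+2) ≤ (j:ℝ) + y := by
    have := Nat.cast_nonneg (α := ℝ) j; linarith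
  have h := abs_hh1_le k haE
  rw [hh1, show (j:ℝ)+1+y = ((j:ℝ)+y)+1 from by ring]
  exact h

lemma abs_hh (k j : ℕ) {y : ℝ} (hy : Real.exp (2*(k:ℝ)+2) ≤ y) :
    |hh k j y| ≤ 2 * (Real.log ((j:ℝ)+y) ^ k / ((j:ℝ)+y) ^ 2) := by
  have haE : Real.exp (2*(k:ℝ)+2) ≤ (j:ℝ) + y := by
    have := Nat.cast_nonneg (α := ℝ) j; linarith
  have h := abs_hh_le k haE
  rw [hh, show (j:ℝ)+1+y = ((j:ℝ)+y)+1 from by ring]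
  exact h

lemma logpow' (k m : ℕ) {x : ℝ} (hx : Real.exp (2*(k:ℝ)+2) + 1 ≤ x) :
    Summable (fun j : ℕ => Real.log ((j:ℝ)+x) ^ k / ((j:ℝ)+x) ^ (m+2)) ∧
    ∑' j : ℕ, Real.log ((j:ℝ)+x) ^ k / ((j:ℝ)+x) ^ (m+2)
      ≤ Real.log x ^ k / x ^ (m+2) + 2 * (Real.log x ^ k / x ^ (m+1)) := by
  have h := logpow k m hx
  have e : (fun j : ℕ => Real.log (x+j) ^ k / (x+j) ^ (m+2))
      = (fun j : ℕ => Real.log ((j:ℝ)+x) ^ k / ((j:ℝ)+x) ^ (m+2)) :=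
    funext fun j => by rw [add_comm]
  rw [e] at h
  exact h

lemma summable_hh1_norm (k : ℕ) {x : ℝ} (hx : Real.exp (2*(k:ℝ)+2) + 1 ≤ x) :
    Summable (fun j : ℕ => ‖hh1 k j x‖) := by
  have hxE : Real.exp (2*(k:ℝ)+2) ≤ x := by linarith
  exact Summable.of_nonneg_of_le (fun j => norm_nonneg _)
    (fun j => abs_hh1 k j hxE) ((logpow' k 1 hx).1.mul_left 4)

lemma summable_hh (k : ℕ) {x : ℝ} (hx : Real.exp (2*(k:ℝ)+2) + 1 ≤ x) :
    Summable (fun j : ℕ => hh k j x) := by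
  have hxE : Real.exp (2*(k:ℝ)+2) ≤ x := by linarith
  exact Summable.of_norm (Summable.of_nonneg_of_le (fun j => norm_nonneg _)
    (fun j => abs_hh k j hxE) ((logpow' k 0 hx).1.mul_left 2))

lemma tsum_hh1_bound (k : ℕ) {x : ℝ} (hx : Real.exp (2*(k:ℝ)+2) + 1 ≤ x) :
    ∑' j : ℕ, ‖hh1 k j x‖ ≤ 12 * (Real.log x ^ k / x ^ 2) := by
  have hxE : Real.exp (2*(k:ℝ)+2) ≤ x := by linarith
  have hE1 : (1:ℝ) ≤ Real.exp (2*(k:ℝ)+2) := Real.one_le_exp (by positivity)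
  have hx1 : (1:ℝ) ≤ x := by linarith
  have hx0 : (0:ℝ) < x := by linarith
  have hL0 : 0 ≤ Real.log x := Real.log_nonneg hx1
  have h1 : ∑' j : ℕ, ‖hh1 k j x‖
      ≤ ∑' j : ℕ, 4 * (Real.log ((j:ℝ)+x) ^ k / ((j:ℝ)+x) ^ 3) :=
    Summable.tsum_le_tsum (fun j => abs_hh1 k j hxE) (summable_hh1_norm k hx)
      ((logpow' k 1 hx).1.mul_left 4)
  have h2 := (logpow' k 1 hx).2
  rw [tsum_mul_left] at h1
  have h3 : Real.log x ^ k / x ^ 3 ≤ Real.log x ^ k / x ^ 2 :=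
    div_le_div_of_nonneg_left (by positivity) (by positivity) (by nlinarith)
  have h4 : Real.log x ^ k / x ^ (1+2) = Real.log x ^ k / x ^ 3 := rfl
  have h5 : Real.log x ^ k / x ^ (1+1) = Real.log x ^ k / x ^ 2 := rfl
  rw [h4, h5] at h2
  nlinarith

lemma hasDerivAt_tsum_hh (k : ℕ) {x : ℝ} (hx : Real.exp (2*(k:ℝ)+2) + 1 < x) :
    HasDerivAt (fun y => ∑' j : ℕ, hh k j y) (∑' j : ℕ, hh1 k j x) x := by
  set X : ℝ := Real.exp (2*(k:ℝ)+2) + 1 with hX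
  have hE0 : (0:ℝ) < Real.exp (2*(k:ℝ)+2) := Real.exp_pos _
  have hX0 : (0:ℝ) < X := by rw [hX]; linarith
  have main := hasDerivAt_of_tendstoUniformlyOn (isOpen_Ioi (a := X))
    (f := fun (n : ℕ) (y : ℝ) => ∑ j ∈ Finset.range n, hh k j y)
    (f' := fun (n : ℕ) (y : ℝ) => ∑ j ∈ Finset.range n, hh1 k j y)
    (g := fun y => ∑' j : ℕ, hh k j y)
    (g' := fun y => ∑' j : ℕ, hh1 k j y)
    (l := atTop) ?_ ?_ ?_ (show x ∈ Ioi X from hx)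
  · exact main
  · apply tendstoUniformlyOn_tsum_nat ((logpow' k 1 (le_refl X)).1.mul_left 4)
    intro j y hy
    have hyX : X ≤ y := (le_of_lt hy)
    have hyE : Real.exp (2*(k:ℝ)+2) ≤ y := by rw [hX] at hyX; linarith
    refine le_trans (abs_hh1 k j hyE) ?_
    have hmemX : (j:ℝ) + X ∈ Ici (Real.exp (2*(k:ℝ)+2)) := by
      have := Nat.cast_nonneg (α := ℝ) j
      rw [Set.mem_Ici, hX]; linarith
    have hmemy : (j:ℝ) + y ∈ Ici (Real.exp (2*(k:ℝ)+2)) := by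
      have := Nat.cast_nonneg (α := ℝ) j
      rw [Set.mem_Ici]; linarith
    have := anti k 2 hmemX hmemy (by linarith)
    simp only at this
    have h4 : (0:ℝ) ≤ 4 := by norm_num
    nlinarith [this]
  · apply Filter.Eventually.of_forall
    intro n y hy
    exact HasDerivAt.fun_sum fun j _ => hasDerivAt_hh k j (lt_trans hX0 hy)
  · intro y hy
    exact (summable_hh k (le_of_lt hy)).hasSum.tendsto_sum_nat

lemma psiGen_rep (k : ℕ) {x : ℝ} (hx : Real.exp (2*(k:ℝ)+2) + 1 ≤ x) :
    psiGen k x = gG k x - ∑' j : ℕ, hh k j x := by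
  have hE0 : (0:ℝ) < Real.exp (2*(k:ℝ)+2) := Real.exp_pos _
  have hE1 : (1:ℝ) ≤ Real.exp (2*(k:ℝ)+2) := Real.one_le_exp (by positivity)
  have hx0 : (0:ℝ) < x := by linarith
  have harg : ∀ n : ℕ, Real.exp (2*(k:ℝ)+2) ≤ (n:ℝ) + x := fun n => by
    have := Nat.cast_nonneg (α := ℝ) n; linarith
  have hargpos : ∀ n : ℕ, (0:ℝ) < (n:ℝ) + x := fun n =>
    lt_of_lt_of_le hE0 (harg n)
  -- telescoping identity
  have claim : ∀ n : ℕ,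
      (∑ j ∈ Finset.range (n + 1), (Real.log (j + x)) ^ k / (j + x))
        - (Real.log (n + x)) ^ (k + 1) / (k + 1)
      = (∑ j ∈ Finset.range (n+1), hh k j x)
          + (gG k ((n:ℝ)+1+x) - gG k ((n:ℝ)+x)) - gG k x := by
    intro n
    have e2 : ∑ j ∈ Finset.range (n+1), (Real.log ((j:ℝ) + x)) ^ k / ((j:ℝ) + x)
        = ∑ j ∈ Finset.range (n+1),
            (hh k j x + (gG k ((j:ℝ)+1+x) - gG k ((j:ℝ)+x))) := by
      refine Finset.sum_congr rfl fun j _ => ?_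
      rw [hh, g0]; ring
    have e3 : ∑ j ∈ Finset.range (n+1), (gG k ((j:ℝ)+1+x) - gG k ((j:ℝ)+x))
        = gG k ((n:ℝ)+1+x) - gG k x := by
      have e4 : ∀ j : ℕ, gG k ((j:ℝ)+1+x) - gG k ((j:ℝ)+x)
          = (fun i : ℕ => gG k ((i:ℝ)+x)) (j+1) - (fun i : ℕ => gG k ((i:ℝ)+x)) j := by
        intro j
        simp only
        have : ((j+1:ℕ):ℝ) + x = (j:ℝ)+1+x := by push_cast; ring
        rw [this]
      rw [Finset.sum_congr rfl fun j _ => e4 j, Finset.sum_range_sub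
        (fun i : ℕ => gG k ((i:ℝ)+x)) (n+1)]
      simp only [Nat.cast_zero, zero_add]
      have : ((n+1:ℕ):ℝ) + x = (n:ℝ)+1+x := by push_cast; ring
      rw [this]
    rw [e2, Finset.sum_add_distrib, e3]
    simp only [gG]
    ring
  -- limits
  have hT : Tendsto (fun n : ℕ => ∑ j ∈ Finset.range (n+1), hh k j x) atTop
      (𝓝 (∑' j : ℕ, hh k j x)) :=
    ((summable_hh k hx).hasSum.tendsto_sum_nat).comp (tendsto_add_atTop_nat 1)
  have hupper : ∀ n : ℕ, gG k ((n:ℝ)+1+x) - gG k ((n:ℝ)+x) ≤ g0 k ((n:ℝ)+x) := by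
    intro n
    obtain ⟨c, hc, hc2⟩ := mvt_one (lt_add_one ((n:ℝ)+x))
      (fun t ht => hasDerivAt_gG k (lt_of_lt_of_le (hargpos n) ht.1))
    simp only [add_sub_cancel_left, mul_one] at hc2
    have hrw : (n:ℝ)+1+x = ((n:ℝ)+x)+1 := by ring
    rw [hrw, hc2]
    have hcE : Real.exp (2*(k:ℝ)+2) ≤ c := le_trans (harg n) hc.1.le
    have := anti k 0 (Set.mem_Ici.2 (harg n)) (Set.mem_Ici.2 hcE) hc.1.le
    norm_num at this
    rw [g0, g0]
    exact this
  have hlower : ∀ n : ℕ, 0 ≤ gG k ((n:ℝ)+1+x) - gG k ((n:ℝ)+x) := by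
    intro n
    have h1 : (1:ℝ) ≤ (n:ℝ) + x := le_trans hE1 (harg n)
    have hlog1 : 0 ≤ Real.log ((n:ℝ)+x) := Real.log_nonneg h1
    have hlog2 : Real.log ((n:ℝ)+x) ≤ Real.log ((n:ℝ)+1+x) :=
      Real.log_le_log (hargpos n) (by linarith)
    have := pow_le_pow_left₀ hlog1 hlog2 (k+1)
    rw [gG, gG]
    apply sub_nonneg.2
    apply div_le_div_of_nonneg_right this (by positivity)
  have hg0tend : Tendsto (fun n : ℕ => g0 k ((n:ℝ)+x)) atTop (𝓝 0) := by
    have hcomp : Tendsto (fun n : ℕ => (n:ℝ) + x) atTop atTop :=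
      tendsto_atTop_add_const_right atTop x tendsto_natCast_atTop_atTop
    have := (Real.tendsto_pow_log_div_mul_add_atTop 1 0 k one_ne_zero).comp hcomp
    refine this.congr fun n => ?_
    simp [g0, Function.comp]
  have hdiff : Tendsto (fun n : ℕ => gG k ((n:ℝ)+1+x) - gG k ((n:ℝ)+x)) atTop (𝓝 0) :=
    tendsto_of_tendsto_of_tendsto_of_le_of_le tendsto_const_nhds hg0tend hlower hupper
  have hfinal : Tendsto (fun n : ℕ =>
      (∑ j ∈ Finset.range (n + 1), (Real.log (j + x)) ^ k / (j + x))
        - (Real.log (n + x)) ^ (k + 1) / (k + 1)) atTop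
      (𝓝 ((∑' j : ℕ, hh k j x) - gG k x)) := by
    have := (hT.add hdiff).sub_const (gG k x)
    simp only [add_zero] at this
    exact this.congr fun n => (claim n).symm
  rw [psiGen, hfinal.limUnder_eq]
  ring

theorem psiGen_deriv_asymptotic (ℓ : ℕ) :
    (fun x : ℝ => deriv (psiGen ℓ) x - (Real.log x) ^ ℓ / x)
      =O[Filter.atTop] (fun x : ℝ => (Real.log x) ^ ℓ / x ^ 2) := by
  rw [Asymptotics.isBigO_iff]
  refine ⟨12, ?_⟩
  filter_upwards [eventually_gt_atTop (Real.exp (2*(ℓ:ℝ)+2) + 1)] with x hxX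
  have hE0 : (0:ℝ) < Real.exp (2*(ℓ:ℝ)+2) := Real.exp_pos _
  have hE1 : (1:ℝ) ≤ Real.exp (2*(ℓ:ℝ)+2) := Real.one_le_exp (by positivity)
  have hx0 : (0:ℝ) < x := by linarith
  have hx1 : (1:ℝ) ≤ x := by linarith
  have hEq : psiGen ℓ =ᶠ[𝓝 x] fun y => gG ℓ y - ∑' j : ℕ, hh ℓ j y := by
    filter_upwards [isOpen_Ioi.mem_nhds
      (show x ∈ Set.Ioi (Real.exp (2*(ℓ:ℝ)+2) + 1) from hxX)] with y hy
    exact psiGen_rep ℓ (le_of_lt hy)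
  have hG : HasDerivAt (gG ℓ) (g0 ℓ x) x := hasDerivAt_gG ℓ hx0
  have hT := hasDerivAt_tsum_hh ℓ hxX
  have hD : HasDerivAt (fun y => gG ℓ y - ∑' j : ℕ, hh ℓ j y)
      (g0 ℓ x - ∑' j : ℕ, hh1 ℓ j x) x := hG.sub hT
  have hderiv : deriv (psiGen ℓ) x = g0 ℓ x - ∑' j : ℕ, hh1 ℓ j x := by
    rw [hEq.deriv_eq, hD.deriv]
  rw [hderiv]
  have hre : g0 ℓ x - (∑' j : ℕ, hh1 ℓ j x) - Real.log x ^ ℓ / x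
      = -∑' j : ℕ, hh1 ℓ j x := by rw [g0]; ring
  rw [hre, norm_neg]
  have h1 : ‖∑' j : ℕ, hh1 ℓ j x‖ ≤ ∑' j : ℕ, ‖hh1 ℓ j x‖ :=
    norm_tsum_le_tsum_norm (summable_hh1_norm ℓ hxX.le)
  have h2 := tsum_hh1_bound ℓ hxX.le
  have hL0 : 0 ≤ Real.log x := Real.log_nonneg hx1
  have hnorm : ‖Real.log x ^ ℓ / x ^ 2‖ = Real.log x ^ ℓ / x ^ 2 :=
    abs_of_nonneg (by positivity)
  rw [hnorm]
  calc ‖∑' j : ℕ, hh1 ℓ j x‖ ≤ ∑' j : ℕ, ‖hh1 ℓ j x‖ := h1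
    _ ≤ 12 * (Real.log x ^ ℓ / x ^ 2) := h2
end
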